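/- arXiv:1710.00565 — 7 statements merged into one kernel-verified Lean document; each statement's English description precedes it below -/
import Mathlib

section
/- Let L be a closed subset of [0,1/2] containing 0 that is closed under the operation s₁ ⊕ s₂ := min{s₁+s₂, 1−s₁−s₂}. If L is finite, then L = {0, 1/k, 2/k, ..., ⌊k/2⌋/k} for some positive integer k. -/
/-- Let `L ⊆ [0,1/2]` be closed, contain `0`, and be closed under the
operation `s₁ ⊕ s₂ := min (s₁+s₂) (1-s₁-s₂)`.  If `L` is finite then
`L = {0, 1/k, …, ⌊k/2⌋/k}` for some positive integer `k`. -/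
theorem stmt0 (L : Set ℝ) (hsub : L ⊆ Set.Icc 0 (1/2)) (h0 : (0:ℝ) ∈ L)
    (hclosed : IsClosed L)
    (hop : ∀ s₁ ∈ L, ∀ s₂ ∈ L, min (s₁ + s₂) (1 - s₁ - s₂) ∈ L)
    (hfin : L.Finite) :
    ∃ k : ℕ, 0 < k ∧ L = (fun i : ℕ => (i : ℝ) / k) '' Set.Iic (k / 2) := by
  by_cases htriv : ∀ t ∈ L, t = 0
  · refine ⟨1, one_pos, ?_⟩
    ext x
    simp only [Set.mem_image, Set.mem_Iic]
    constructor
    · intro hx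
      exact ⟨0, by norm_num, by simp [htriv x hx]⟩
    · rintro ⟨i, hi, rfl⟩
      have : i = 0 := by omega
      simpa [this] using h0
  · push_neg at htriv
    obtain ⟨t₀, ht₀L, ht₀⟩ := htriv
    have ht₀pos : 0 < t₀ := lt_of_le_of_ne (hsub ht₀L).1 (Ne.symm ht₀)
    -- minimal positive element s
    set P : Set ℝ := L ∩ Set.Ioi 0 with hPdef
    have hPfin : P.Finite := hfin.inter_of_left _
    have hPne : P.Nonempty := ⟨t₀, ht₀L, ht₀pos⟩
    obtain ⟨s, hsP, hsmin⟩ := Set.exists_min_image P id hPfin hPne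
    have hsL : s ∈ L := hsP.1
    have hspos : 0 < s := hsP.2
    have hsmin' : ∀ t ∈ L, 0 < t → s ≤ t := fun t ht htp => hsmin t ⟨ht, htp⟩
    have hs12 : s ≤ 1/2 := (hsub hsL).2
    -- maximal element M
    obtain ⟨M, hML, hMmax⟩ := Set.exists_max_image L id hfin ⟨0, h0⟩
    have hM12 : M ≤ 1/2 := (hsub hML).2
    have hMpos : 0 < M := lt_of_lt_of_le hspos (hMmax s hsL)
    -- step lemma
    have hstep : ∀ t ∈ L, t + s ≤ 1/2 → t + s ∈ L := by
      intro t ht h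
      have := hop t ht s hsL
      rwa [min_eq_left (by linarith)] at this
    have hMbig : 1/2 < M + s := by
      by_contra h
      push_neg at h
      have := hMmax _ (hstep M hML h)
      simp only [id] at this
      linarith
    -- reflection lemma
    have hrefl : ∀ t ∈ L, 0 < t → 1 - t - M ∈ L := by
      intro t ht htpos
      have hst := hsmin' t ht htpos
      have h := hop t ht M hML
      rwa [min_eq_right (by linarith)] at h
    -- key dichotomy
    have hkey : M = 1/2 ∨ 2*M + s = 1 := by
      rcases eq_or_lt_of_le hM12 with h | h
      · exact Or.inl h
      · have h1 : 1 - M - M ∈ L := hrefl M hML hMpos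
        have h3 : s ≤ 1 - M - M := hsmin' _ h1 (by linarith)
        have h4 : 1 - s - M ∈ L := hrefl s hsL hspos
        have h5 : 1 - s - M ≤ M := hMmax _ h4
        right; linarith
    -- difference closure
    have hdiff : ∀ t ∈ L, ∀ u ∈ L, u ≤ t → t - u ∈ L := by
      rcases hkey with hA | hB
      · intro t ht u hu hut
        have hhalfu : 1/2 - u ∈ L := by
          rcases eq_or_lt_of_le (hsub hu).1 with h | h
          · rw [← h, sub_zero, ← hA]; exact hML
          · have h2 := hrefl u hu h
            have he : (1:ℝ)/2 - u = 1 - u - M := by rw [hA]; ring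
            rw [he]; exact h2
        have hv : 1/2 - (t - u) ∈ L := by
          have h2 := hop t ht _ hhalfu
          rw [min_eq_right (by linarith)] at h2
          have he : (1:ℝ)/2 - (t - u) = 1 - t - (1/2 - u) := by ring
          rw [he]; exact h2
        rcases eq_or_lt_of_le (hsub hv).1 with h | h
        · have he : t - u = 1/2 := by linarith
          rw [he, ← hA]; exact hML
        · have h2 := hrefl _ hv h
          have he : t - u = 1 - (1/2 - (t - u)) - M := by rw [hA]; ring
          rw [he]; exact h2
      · -- case 2M + s = 1
        have hBM : M < 1/2 := by linarith
        intro t ht u hu hut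
        rcases eq_or_lt_of_le (hsub hu).1 with hu0 | hu0
        · rw [← hu0, sub_zero]; exact ht
        rcases eq_or_lt_of_le hut with h | h
        · rw [h, sub_self]; exact h0
        have htpos : 0 < t := lt_trans hu0 h
        have hc : 1 - t - M ∈ L := hrefl t ht htpos
        have hv := hop u hu _ hc
        rcases min_cases (u + (1 - t - M)) (1 - u - (1 - t - M)) with ⟨heq, _⟩ | ⟨heq, _⟩
        · rw [heq] at hv
          have hvpos : 0 < u + (1 - t - M) := by
            have := (hsub ht).2
            linarith
          have hr := hrefl _ hv hvpos
          have he : t - u = 1 - (u + (1 - t - M)) - M := by ring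
          rw [he]; exact hr
        · rw [heq] at hv
          have hvpos : 0 < 1 - u - (1 - t - M) := by linarith
          have hr := hrefl _ hv hvpos
          have hw' : s - (t - u) ∈ L := by
            have he : s - (t - u) = 1 - (1 - u - (1 - t - M)) - M := by linarith
            rw [he]; exact hr
          rcases eq_or_lt_of_le (hsub hw').1 with h2 | h2
          · have he : t - u = s := by linarith
            rw [he]; exact hsL
          · exfalso
            have := hsmin' _ hw' h2
            linarith
    -- every element is a multiple of s
    have hmul : ∀ t ∈ L, ∃ i : ℕ, t = i * s := by
      have aux : ∀ j : ℕ, ∀ t, t ∈ L → t ≤ j * s → ∃ i : ℕ, t = i * s := by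
        intro j
        induction j with
        | zero =>
          intro t ht hle
          have h1 : t = 0 := le_antisymm (by simpa using hle) (hsub ht).1
          exact ⟨0, by simp [h1]⟩
        | succ j ih =>
          intro t ht hle
          rcases eq_or_lt_of_le (hsub ht).1 with h | h
          · exact ⟨0, by simp [← h]⟩
          · have hst : s ≤ t := hsmin' t ht h
            have hts : t - s ∈ L := hdiff t ht s hsL hst
            have hle' : t - s ≤ j * s := by
              push_cast at hle
              linarith
            obtain ⟨i, hi⟩ := ih (t - s) hts hle'
            exact ⟨i + 1, by push_cast; linear_combination hi⟩
      intro t ht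
      obtain ⟨j, hj⟩ := exists_nat_ge ((1:ℝ)/(2*s))
      apply aux j t ht
      rw [div_le_iff₀ (by positivity : (0:ℝ) < 2*s)] at hj
      have h2 := (hsub ht).2
      nlinarith
    -- multiples up to M are in L
    have hmulup : ∀ i : ℕ, (i:ℝ) * s ≤ M → (i:ℝ) * s ∈ L := by
      intro i
      induction i with
      | zero => intro _; simpa using h0
      | succ i ih =>
        intro hle
        have hle' : (i:ℝ) * s + s ≤ M := by push_cast at hle; linarith
        have h1 : (i:ℝ) * s ∈ L := ih (by linarith)
        have h2 : (i:ℝ) * s + s ∈ L := hstep _ h1 (by linarith)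
        have he : ((i:ℕ):ℝ) * s + s = ((i+1:ℕ):ℝ) * s := by push_cast; ring
        rwa [he] at h2
    obtain ⟨N, hN⟩ := hmul M hML
    have hNpos : 0 < N := by
      rcases Nat.eq_zero_or_pos N with h | h
      · exfalso; rw [h] at hN; simp at hN; linarith
      · exact h
    obtain ⟨k, hkpos, hks, hk2⟩ : ∃ k : ℕ, 0 < k ∧ (k:ℝ) * s = 1 ∧ k / 2 = N := by
      rcases hkey with hA | hB
      · exact ⟨2*N, by omega, by push_cast; linear_combination (-2:ℝ)*hN + 2*hA, by omega⟩
      · exact ⟨2*N+1, by omega, by push_cast; linear_combination hB - 2*hN, by omega⟩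
    have hkne : ((k:ℝ)) ≠ 0 := by positivity
    have hs1k : s = 1/(k:ℝ) := by
      field_simp
      linarith
    refine ⟨k, hkpos, ?_⟩
    ext x
    simp only [Set.mem_image, Set.mem_Iic]
    constructor
    · intro hx
      obtain ⟨i, rfl⟩ := hmul x hx
      refine ⟨i, ?_, ?_⟩
      · have h1 := hMmax _ hx
        simp only [id] at h1
        rw [hN] at h1
        have h2 : (i:ℝ) ≤ N := le_of_mul_le_mul_right (by linarith) hspos
        have h3 : i ≤ N := by exact_mod_cast h2
        omega
      · rw [hs1k]; ring
    · rintro ⟨i, hi, rfl⟩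
      have hi' : i ≤ N := by omega
      have h1 : (i:ℝ) * s ≤ M := by
        rw [hN]
        apply mul_le_mul_of_nonneg_right _ hspos.le
        exact_mod_cast hi'
      have h2 := hmulup i h1
      have he : ((i:ℕ):ℝ) / k = (i:ℝ) * s := by rw [hs1k]; ring
      rwa [he]
end

section
/- Let L be a subset of [0,1/2] containing 0 that is topologically closed and closed under the operation s₁ ⊕ s₂ := min{s₁+s₂, 1−s₁−s₂}. If L is infinite, then L = [0,1/2]. -/
/-- Let `L ⊆ [0,1/2]` be topologically closed, contain `0`, and be closed
under `s₁ ⊕ s₂ := min (s₁+s₂) (1-s₁-s₂)`.  If `L` is infinite then `L = [0,1/2]`. -/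
theorem stmt1 (L : Set ℝ) (hsub : L ⊆ Set.Icc 0 (1/2)) (h0 : (0:ℝ) ∈ L)
    (hclosed : IsClosed L)
    (hop : ∀ s₁ ∈ L, ∀ s₂ ∈ L, min (s₁ + s₂) (1 - s₁ - s₂) ∈ L)
    (hinf : L.Infinite) :
    L = Set.Icc 0 (1/2) := by
  -- multiples of an element stay in L while below 1/2
  have hmul : ∀ e ∈ L, ∀ k : ℕ, (k : ℝ) * e ≤ 1/2 → (k : ℝ) * e ∈ L := by
    intro e he k
    induction k with
    | zero => intro _; simpa using h0
    | succ k ih =>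
      intro hk
      have he0 : 0 ≤ e := (hsub he).1
      have hk' : (k : ℝ) * e + e ≤ 1/2 := by push_cast at hk; nlinarith
      have hkL : (k : ℝ) * e ∈ L := ih (by nlinarith)
      have h := hop e he _ hkL
      rw [min_eq_left (by linarith)] at h
      have : ((k+1 : ℕ) : ℝ) * e = e + (k:ℝ) * e := by push_cast; ring
      rwa [this]
  by_cases hsmall : ∀ ε > (0:ℝ), ∃ e ∈ L, 0 < e ∧ e < ε
  · -- dense case
    apply Set.Subset.antisymm hsub
    intro x hx
    have hx0 : 0 ≤ x := hx.1
    have hx2 : x ≤ 1/2 := hx.2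
    have : x ∈ closure L := by
      rw [Metric.mem_closure_iff]
      intro ε hε
      obtain ⟨e, heL, he0, heε⟩ := hsmall ε hε
      set k := Nat.floor (x / e) with hk
      have hdiv : 0 ≤ x / e := div_nonneg hx0 he0.le
      have h1 : (k : ℝ) * e ≤ x := by
        rw [← le_div_iff₀ he0]
        exact Nat.floor_le hdiv
      have h2 : x < ((k:ℝ) + 1) * e := by
        rw [← div_lt_iff₀ he0]
        exact Nat.lt_floor_add_one _
      refine ⟨(k:ℝ) * e, hmul e heL k (le_trans h1 hx2), ?_⟩
      rw [Real.dist_eq, abs_of_nonneg (by linarith)]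
      nlinarith
    rwa [hclosed.closure_eq] at this
  · push_neg at hsmall
    obtain ⟨ε, hε, hεmin⟩ := hsmall
    -- the minimal positive element a of L
    have hTne : (L ∩ Set.Ici ε).Nonempty := by
      have h' : (L \ {0}).Infinite := hinf.diff (Set.finite_singleton 0)
      obtain ⟨x, hxL, hx0⟩ := h'.nonempty
      have : (0:ℝ) < x := lt_of_le_of_ne (hsub hxL).1 (Ne.symm hx0)
      exact ⟨x, hxL, hεmin x hxL this⟩
    have hTcl : IsClosed (L ∩ Set.Ici ε) := hclosed.inter isClosed_Ici
    have hTbdd : BddBelow (L ∩ Set.Ici ε) := ⟨ε, fun x hx => hx.2⟩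
    set a := sInf (L ∩ Set.Ici ε) with ha
    have haT : a ∈ L ∩ Set.Ici ε := hTcl.csInf_mem hTne hTbdd
    have haL : a ∈ L := haT.1
    have ha0 : 0 < a := lt_of_lt_of_le hε haT.2
    have ha2 : a ≤ 1/2 := (hsub haL).2
    have hmin : ∀ x ∈ L, 0 < x → a ≤ x := by
      intro x hxL hx0
      exact csInf_le hTbdd ⟨hxL, hεmin x hxL hx0⟩
    -- no elements of L in (1/2 - a/2, 1/2)
    have hforb : ∀ w ∈ L, w < 1/2 → w ≤ 1/2 - a/2 := by
      intro w hw hw2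
      by_contra hc
      push_neg at hc
      have h := hop w hw w hw
      rw [min_eq_right (by linarith)] at h
      have h1 : 0 < 1 - w - w := by linarith
      have := hmin _ h h1
      linarith
    -- every element of L is 1/2 - j*(a/2)
    have key : ∀ n : ℕ, ∀ x ∈ L, 1/2 - x ≤ (n:ℝ) * a →
        ∃ j : ℕ, x = 1/2 - (j:ℝ) * (a/2) := by
      intro n
      induction n with
      | zero =>
        intro x hx hxn
        refine ⟨0, ?_⟩
        have := (hsub hx).2
        push_cast at hxn
        push_cast
        linarith
      | succ n ih =>
        intro x hx hxn
        rcases le_or_gt (x + a) (1/2) with hle | hlt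
        · have hxa : x + a ∈ L := by
            have := hop x hx a haL
            rwa [min_eq_left (by linarith)] at this
          obtain ⟨j, hj⟩ := ih (x + a) hxa (by push_cast at hxn ⊢; linarith)
          exact ⟨j + 2, by push_cast at hj ⊢; linarith⟩
        · have hx2 : x ≤ 1/2 := (hsub hx).2
          rcases eq_or_lt_of_le hx2 with heq | hlt2
          · exact ⟨0, by push_cast; linarith⟩
          · have hxle : x ≤ 1/2 - a/2 := hforb x hx hlt2
            have hyL : 1 - x - a ∈ L := by
              have := hop x hx a haL
              rwa [min_eq_right (by linarith)] at this
            have hy2 : 1 - x - a < 1/2 := by linarith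
            have hyle : 1 - x - a ≤ 1/2 - a/2 := hforb _ hyL hy2
            exact ⟨1, by push_cast; linarith⟩
    obtain ⟨n, hn⟩ := exists_nat_ge (1/(2*a))
    have hna : (1:ℝ)/2 ≤ (n:ℝ) * a := by
      have h := mul_le_mul_of_nonneg_right hn ha0.le
      calc (1:ℝ)/2 = (1/(2*a)) * a := by field_simp
      _ ≤ (n:ℝ) * a := h
    have hsubfin : L ⊆ (fun j : ℕ => 1/2 - (j:ℝ) * (a/2)) '' (Set.Iic (Nat.ceil (1/a))) := by
      intro x hx
      obtain ⟨j, hj⟩ := key n x hx (by have := (hsub hx).1; linarith)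
      refine ⟨j, ?_, hj.symm⟩
      have hx0 : 0 ≤ x := (hsub hx).1
      have hja : (j:ℝ) * a ≤ 1 := by nlinarith
      have hj1 : (j:ℝ) ≤ 1/a := by
        rw [le_div_iff₀ ha0]; exact hja
      exact Set.mem_Iic.mpr (Nat.cast_le.mp (le_trans hj1 (Nat.le_ceil _)))
    exact absurd (((Set.finite_Iic _).image _).subset hsubfin) hinf
end

section
/- Let F = {f₁,...,f_N} be a finite family of homeomorphisms of the circle S¹ = ℝ/ℤ with the standard metric d, and define L(F,d) to be the set of s ∈ [0,1/2] such that d(x,y) = s implies d(f_j(x), f_j(y)) = s for all j and all x,y ∈ S¹. Then L(F,d) is closed under the operation s₁ ⊕ s₂ := min{s₁+s₂, 1−s₁−s₂}: for all s₁, s₂ ∈ L(F,d), s₁ ⊕ s₂ ∈ L(F,d). -/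
open Set

local notation "S" => UnitAddCircle

lemma unorm (r : ℝ) : ‖(r : S)‖ = |r - round r| := by
  rw [AddCircle.norm_eq]; norm_num

lemma coe_eq_zero (r : ℝ) : ((r : ℝ) : S) = 0 ↔ ∃ n : ℤ, (n:ℝ) = r := by
  rw [AddCircle.coe_eq_zero_iff]; simp [zsmul_eq_mul]

lemma coe_eq_coe {a b : ℝ} (h : ((a:ℝ):S) = b) : ∃ n : ℤ, b - a = n := by
  have : ((b - a : ℝ) : S) = 0 := by rw [AddCircle.coe_sub, h, sub_self]
  obtain ⟨n, hn⟩ := (coe_eq_zero _).mp this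
  exact ⟨n, hn.symm⟩

lemma dist_char {s : ℝ} (h0 : 0 ≤ s) {x y : S} (h : dist x y = s) :
    y = x + (s:ℝ) ∨ y = x - (s:ℝ) := by
  obtain ⟨r, hr⟩ : ∃ r : ℝ, ((r:ℝ):S) = y - x := Quot.exists_rep _
  have hn : |r - round r| = s := by
    rw [← unorm, hr, ← dist_eq_norm, dist_comm, ← h, dist_comm]
  have hz : ((r - (round r : ℝ) : ℝ) : S) = y - x := by
    have h0' : (((round r : ℝ)) : S) = 0 := (coe_eq_zero _).mpr ⟨round r, rfl⟩
    rw [AddCircle.coe_sub, h0', sub_zero, hr]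
  rcases (abs_eq h0).mp hn with h' | h'
  · left
    rw [h'] at hz
    exact sub_eq_iff_eq_add'.mp hz.symm
  · right
    rw [h', AddCircle.coe_neg] at hz
    have := sub_eq_iff_eq_add'.mp hz.symm
    simpa [sub_eq_add_neg] using this

lemma norm_coe_min {r : ℝ} (h0 : 0 ≤ r) (h1 : r ≤ 1) : ‖(r : S)‖ = min r (1-r) := by
  rw [unorm, abs_sub_round_eq_min]
  rcases eq_or_lt_of_le h1 with h | h
  · subst h; norm_num
  · rw [Int.fract_eq_self.mpr ⟨h0, h⟩]

lemma dist_add_coe (x : S) (z : S) : dist x (x + z) = ‖z‖ := by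
  rw [dist_eq_norm]; simp [norm_sub_rev]

lemma norm_neg_half : ‖((-(1/2) : ℝ) : S)‖ = 1/2 := by
  rw [unorm, round_eq]
  norm_num

lemma int_const {a b : ℝ} {g : ℝ → ℝ} (hab : a ≤ b) (hg : ContinuousOn g (Icc a b))
    (hint : ∀ t ∈ Icc a b, ∃ n : ℤ, g t = n) : ∀ t ∈ Icc a b, g t = g a := by
  have key : ∀ u v : ℝ, u ∈ Icc a b → v ∈ Icc a b → u ≤ v → g u = g v := by
    intro u v hu hv huv
    obtain ⟨n, hn⟩ := hint u hu
    obtain ⟨m, hm⟩ := hint v hv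
    by_contra hne
    have hnm : n ≠ m := fun h => hne (by rw [hn, hm, h])
    have hsub : Icc u v ⊆ Icc a b := Icc_subset_Icc hu.1 hv.2
    have hgc : ContinuousOn g (uIcc u v) := by rw [uIcc_of_le huv]; exact hg.mono hsub
    have hiv := intermediate_value_uIcc hgc
    set c : ℝ := (min n m : ℝ) + 1/2 with hcdef
    have hc : c ∈ uIcc (g u) (g v) := by
      rw [hn, hm]
      rcases le_total n m with h | h
      · have h' : (n:ℝ) ≤ m := by exact_mod_cast h
        rw [uIcc_of_le h']
        have hlt : n < m := lt_of_le_of_ne h (by omega)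
        have : (n:ℝ) + 1 ≤ m := by exact_mod_cast hlt
        constructor
        · rw [hcdef, min_eq_left h']; linarith
        · rw [hcdef, min_eq_left h']; linarith
      · have h' : (m:ℝ) ≤ n := by exact_mod_cast h
        rw [uIcc_of_ge h']
        have hlt : m < n := lt_of_le_of_ne h (by omega)
        have : (m:ℝ) + 1 ≤ n := by exact_mod_cast hlt
        constructor
        · rw [hcdef, min_eq_right h']; linarith
        · rw [hcdef, min_eq_right h']; linarith
    obtain ⟨u', hu', hgu'⟩ := hiv hc
    rw [uIcc_of_le huv] at hu'
    obtain ⟨k, hk⟩ := hint u' (hsub hu')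
    rw [hk] at hgu'
    have h2 : (2*k : ℝ) = 2 * ((min n m : ℤ) : ℝ) + 1 := by
      rw [hcdef] at hgu'
      rcases le_total n m with h | h
      · have h' : (n:ℝ) ≤ m := by exact_mod_cast h
        rw [min_eq_left h'] at hgu'
        rw [min_eq_left h]; push_cast; linarith
      · have h' : (m:ℝ) ≤ n := by exact_mod_cast h
        rw [min_eq_right h'] at hgu'
        rw [min_eq_right h]; push_cast; linarith
    have h3 : (2*k : ℤ) = 2 * (min n m) + 1 := by exact_mod_cast h2
    omega
  intro t ht
  exact (key a t (left_mem_Icc.mpr hab) ht ht.1).symm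

lemma dist_coe_le (u v : ℝ) : dist ((u:ℝ):S) ((v:ℝ):S) ≤ |u - v| := by
  rw [dist_eq_norm]
  have := (QuotientAddGroup.norm_mk_le_norm : ‖((u - v : ℝ) : ℝ ⧸ AddSubgroup.zmultiples (1:ℝ))‖ ≤ ‖u - v‖)
  simpa [Real.norm_eq_abs] using this

lemma exists_lift (f : S ≃ₜ S) :
    ∃ F : ℝ → ℝ, Continuous F ∧ ∀ t ∈ Icc (0:ℝ) 3, ((F t : ℝ) : S) = f ((t:ℝ) : S) := by
  have huc : UniformContinuous (⇑f) := CompactSpace.uniformContinuous_of_continuous f.continuous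
  obtain ⟨δ, hδ0, hδ⟩ := Metric.uniformContinuous_iff.mp huc (1/4) (by norm_num)
  obtain ⟨N, hN⟩ := exists_nat_gt (3/δ)
  have hN0 : 0 < (N:ℝ) := lt_of_le_of_lt (by positivity) hN
  set γ : ℝ → S := fun t => f ((t:ℝ):S) with hγdef
  have hγ : Continuous γ := f.continuous.comp (AddCircle.continuous_mk' 1)
  set st : ℝ := 3 / N with hstdef
  have hst0 : 0 < st := by positivity
  have hstδ : st < δ := by
    rw [hstdef, div_lt_iff₀ hN0]
    rw [div_lt_iff₀ hδ0] at hN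
    linarith [hN]
  set ι : S → ℝ := fun z => ((AddCircle.equivIco 1 (-(1/2)) z : ℝ)) with hιdef
  have hι : ∀ z : S, ((ι z : ℝ) : S) = z :=
    fun z => (AddCircle.equivIco 1 (-(1/2))).symm_apply_apply z
  have hιc : ∀ z : S, z ≠ ((-(1/2):ℝ):S) → ContinuousAt ι z :=
    fun z hz => continuousAt_subtype_val.comp (AddCircle.continuousAt_equivIco 1 (-(1/2)) hz)
  set g : ℝ → ℕ → S := fun t i => γ (min t (i*st)) with hgdef
  set w : ℕ → ℝ → S := fun i t => g t (i+1) - g t i with hwdef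
  have hws : ∀ i t, ‖w i t‖ < 1/4 := by
    intro i t
    have hd : |min t (((i:ℝ)+1)*st) - min t ((i:ℝ)*st)| < δ := by
      have h1 : (i:ℝ)*st ≤ ((i:ℝ)+1)*st := by nlinarith
      rcases le_total t ((i:ℝ)*st) with h | h
      · rw [min_eq_left h, min_eq_left (h.trans h1)]; simpa using hδ0
      · rw [min_eq_right h]
        rcases le_total t (((i:ℝ)+1)*st) with h' | h'
        · rw [min_eq_left h']
          rw [abs_of_nonneg (by linarith)]
          calc t - (i:ℝ)*st ≤ ((i:ℝ)+1)*st - (i:ℝ)*st := by linarith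
          _ = st := by ring
          _ < δ := hstδ
        · rw [min_eq_right h']
          rw [abs_of_nonneg (by linarith)]
          calc ((i:ℝ)+1)*st - (i:ℝ)*st = st := by ring
          _ < δ := hstδ
    have : dist (g t (i+1)) (g t i) < 1/4 := by
      apply hδ
      refine lt_of_le_of_lt (dist_coe_le _ _) ?_
      push_cast
      exact hd
    rw [hwdef]
    simpa [dist_eq_norm] using this
  have hwne : ∀ i t, w i t ≠ ((-(1/2):ℝ):S) := by
    intro i t heq
    have := hws i t
    rw [heq, norm_neg_half] at this; norm_num at this
  set F0 : ℝ → ℝ := fun t => ∑ i ∈ Finset.range N, ι (w i t) with hF0def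
  have hwc : ∀ i, Continuous (w i) := by
    intro i
    apply Continuous.sub <;>
      exact hγ.comp (continuous_id.min continuous_const)
  have hF0c : Continuous F0 := by
    apply continuous_finset_sum
    intro i _
    rw [continuous_iff_continuousAt]
    intro t
    exact (hιc _ (hwne i t)).comp (hwc i).continuousAt
  have htel : ∀ t ∈ Icc (0:ℝ) 3, ((F0 t : ℝ) : S) = γ t - γ 0 := by
    intro t ht
    have hπ : ((F0 t : ℝ) : S) = ∑ i ∈ Finset.range N, ((ι (w i t) : ℝ) : S) := by
      rw [hF0def]
      exact map_sum (QuotientAddGroup.mk' (AddSubgroup.zmultiples (1:ℝ))) _ _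
    rw [hπ]
    have : ∀ i ∈ Finset.range N, ((ι (w i t) : ℝ) : S) = g t (i+1) - g t i := by
      intro i _; rw [hι]
    rw [Finset.sum_congr rfl this, Finset.sum_range_sub (g t)]
    have hN3 : (N:ℝ) * st = 3 := by rw [hstdef]; field_simp
    have h1 : g t N = γ t := by rw [hgdef]; simp only [hN3]; rw [min_eq_left ht.2]
    have h2 : g t 0 = γ 0 := by rw [hgdef]; norm_num; rw [min_eq_right ht.1]
    rw [h1, h2]
  obtain ⟨r₀, hr₀⟩ : ∃ r₀ : ℝ, ((r₀:ℝ):S) = γ 0 := Quot.exists_rep _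
  refine ⟨fun t => F0 t + r₀, hF0c.add continuous_const, ?_⟩
  intro t ht
  rw [AddCircle.coe_add, htel t ht, hr₀, sub_add_cancel]

lemma dich (f : S ≃ₜ S) {s : ℝ} (h0 : 0 ≤ s) (h2 : s ≤ 1/2)
    (hpres : ∀ x y : S, dist x y = s → dist (f x) (f y) = s) :
    (∀ x : S, f (x + (s:ℝ)) = f x + (s:ℝ)) ∨ (∀ x : S, f (x + (s:ℝ)) = f x - (s:ℝ)) := by
  have pointwise : ∀ x : S, f (x + (s:ℝ)) = f x + (s:ℝ) ∨ f (x + (s:ℝ)) = f x - (s:ℝ) := by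
    intro x
    have hd : dist x (x + (s:ℝ)) = s := by
      rw [dist_add_coe, norm_coe_min h0 (by linarith), min_eq_left (by linarith)]
    exact dist_char h0 (hpres x _ hd)
  by_cases hs : ((s:ℝ) : S) = -((s:ℝ):S)
  · left
    intro x
    rcases pointwise x with h | h
    · exact h
    · rw [h, sub_eq_add_neg, ← hs]
  · set g : S → S := fun x => f (x + (s:ℝ)) - f x with hgdef
    have hg : Continuous g := (f.continuous.comp (continuous_add_right _)).sub f.continuous
    have hcover : ∀ x, g x = ((s:ℝ):S) ∨ g x = -((s:ℝ):S) := by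
      intro x
      rcases pointwise x with h | h
      · left; rw [hgdef]; simp [h]
      · right; rw [hgdef]; simp [h]
    have hA : IsClosed (g ⁻¹' {((s:ℝ):S)}) := isClosed_singleton.preimage hg
    have hB : IsClosed (g ⁻¹' {(-((s:ℝ):S))}) := isClosed_singleton.preimage hg
    have hAB : g ⁻¹' {((s:ℝ):S)} = (g ⁻¹' {(-((s:ℝ):S))})ᶜ := by
      ext x
      simp only [mem_preimage, mem_singleton_iff, mem_compl_iff]
      constructor
      · intro h h'; exact absurd (h.symm.trans h') hs
      · intro h; exact (hcover x).resolve_right h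
    have hclopen : IsClopen (g ⁻¹' {((s:ℝ):S)}) := ⟨hA, by rw [hAB]; exact hB.isOpen_compl⟩
    rcases isClopen_iff.mp hclopen with hemp | huniv
    · right
      intro x
      have hx : g x = -((s:ℝ):S) := by
        rcases hcover x with h | h
        · exfalso; have : x ∈ g ⁻¹' {((s:ℝ):S)} := h; rw [hemp] at this; exact this
        · exact h
      rw [hgdef] at hx
      simp only [sub_eq_iff_eq_add] at hx
      rw [hx]; abel
    · left
      intro x
      have hx : g x = ((s:ℝ):S) := by
        have : x ∈ g ⁻¹' {((s:ℝ):S)} := by rw [huniv]; trivial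
        exact this
      rw [hgdef] at hx
      simp only [sub_eq_iff_eq_add] at hx
      rw [hx]; abel

lemma core_incr (φ : S → S) (hinj : Function.Injective φ) {s : ℝ}
    (hs0 : 0 < s) (hs2 : s < 1/2)
    (hrel : ∀ x : S, φ (x + (s:ℝ)) = φ x - (s:ℝ))
    (F : ℝ → ℝ) (hFc : ContinuousOn F (Icc 0 3))
    (hFl : ∀ t ∈ Icc (0:ℝ) 3, ((F t : ℝ) : S) = φ ((t:ℝ):S))
    (hmono : StrictMonoOn F (Icc 0 3))
    (d : ℝ) (hstep : ∀ t ∈ Icc (0:ℝ) 2, F (t+1) = F t + d) : False := by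
  have mem0 : (0:ℝ) ∈ Icc (0:ℝ) 3 := by norm_num
  have mem1 : (1:ℝ) ∈ Icc (0:ℝ) 3 := by norm_num
  have mems : s ∈ Icc (0:ℝ) 3 := ⟨le_of_lt hs0, by linarith⟩
  have hd1 : F 1 = F 0 + d := by simpa using hstep 0 (by norm_num)
  have hcirc : ∀ a b : ℝ, a ∈ Icc (0:ℝ) 3 → b ∈ Icc (0:ℝ) 3 →
      ((F a :ℝ):S) = ((F b:ℝ):S) → ∃ k : ℤ, b - a = k := by
    intro a b ha hb hFab
    apply coe_eq_coe
    apply hinj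
    rw [← hFl a ha, ← hFl b hb]; exact hFab
  -- d = 1
  have hd_eq : d = 1 := by
    have hdpos : 0 < d := by
      have := hmono mem0 mem1 one_pos; linarith
    have hd_ge1 : 1 ≤ d := by
      have h10 : (((1:ℝ)):S) = (((0:ℝ)):S) := by
        have := AddCircle.coe_add_period 1 (0:ℝ)
        simpa using this
      have : ((F 0:ℝ):S) = ((F 1:ℝ):S) := by
        rw [hFl 0 mem0, hFl 1 mem1, h10]
      obtain ⟨k, hk⟩ := coe_eq_coe this
      have hdk : d = k := by rw [← hk]; linarith
      have : (0:ℝ) < k := hdk ▸ hdpos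
      have : 0 < k := by exact_mod_cast this
      have : (1:ℤ) ≤ k := this
      have : (1:ℝ) ≤ k := by exact_mod_cast this
      linarith [hdk]
    have hsub : Icc (0:ℝ) 1 ⊆ Icc (0:ℝ) 3 := Icc_subset_Icc le_rfl (by norm_num)
    have hiv := intermediate_value_Icc (zero_le_one) (hFc.mono hsub)
    have hcmem : F 0 + 1 ∈ Icc (F 0) (F 1) := ⟨by linarith, by rw [hd1]; linarith⟩
    obtain ⟨c, hc01, hFc1⟩ := hiv hcmem
    have hcc : ((F c:ℝ):S) = ((F 0:ℝ):S) := by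
      rw [hFc1]
      exact AddCircle.coe_add_period 1 (F 0)
    obtain ⟨k, hk⟩ := hcirc c 0 (hsub hc01) mem0 hcc
    have hck : c = -k := by linarith [hk]
    have : c = 0 ∨ c = 1 := by
      have h1 : (0:ℝ) ≤ -k := hck ▸ hc01.1
      have h2 : (-k:ℝ) ≤ 1 := hck ▸ hc01.2
      have h1' : (0:ℤ) ≤ -k := by exact_mod_cast h1
      have h2' : (-k:ℤ) ≤ 1 := by exact_mod_cast h2
      have : k = 0 ∨ k = -1 := by omega
      rcases this with rfl | rfl
      · left; rw [hck]; norm_num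
      · right; rw [hck]; norm_num
    rcases this with rfl | rfl
    · linarith
    · linarith [hd1, hFc1]
  rw [hd_eq] at hd1
  -- the k-relation
  have hkc : ContinuousOn (fun t => F (t+s) - F t + s) (Icc 0 2) := by
    have h1 : ContinuousOn (fun t : ℝ => F (t+s)) (Icc 0 2) := by
      apply hFc.comp (continuous_add_right s).continuousOn
      intro t ht
      simp only [mem_Icc] at ht ⊢
      exact ⟨by linarith [ht.1], by linarith [ht.2]⟩
    have h2 : ContinuousOn F (Icc 0 2) := hFc.mono (Icc_subset_Icc le_rfl (by norm_num))
    exact (h1.sub h2).add continuousOn_const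
  have hkint : ∀ t ∈ Icc (0:ℝ) 2, ∃ n : ℤ, F (t+s) - F t + s = n := by
    intro t ht
    have hts : t + s ∈ Icc (0:ℝ) 3 := ⟨by linarith [ht.1], by linarith [ht.2]⟩
    have ht3 : t ∈ Icc (0:ℝ) 3 := ⟨ht.1, by linarith [ht.2]⟩
    have h1 : ((F (t+s) :ℝ):S) = ((F t - s : ℝ):S) := by
      rw [hFl _ hts, AddCircle.coe_sub, hFl _ ht3, AddCircle.coe_add, hrel]
    obtain ⟨n, hn⟩ := coe_eq_coe h1
    exact ⟨-n, by push_cast; linarith⟩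
  have hkconst := int_const (by norm_num : (0:ℝ) ≤ 2) hkc hkint
  set k : ℝ := F (0 + s) - F 0 + s with hkdef
  have hFs : F s = F 0 - s + k := by rw [hkdef, zero_add]; ring
  obtain ⟨kk, hkk⟩ : ∃ n : ℤ, k = n := by
    obtain ⟨n, hn⟩ := hkint 0 (by norm_num)
    exact ⟨n, by rw [hkdef, hn]⟩
  have hlb : F 0 < F s := hmono mem0 mems hs0
  have hub : F s < F 1 := hmono mems mem1 (by linarith)
  have hk1 : k = 1 := by
    have h1 : s < k := by linarith [hFs, hlb]
    have h2 : k < 1 + s := by linarith [hFs, hub, hd1]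
    have h1' : (0:ℝ) < kk := by rw [← hkk]; linarith
    have h2' : (kk:ℝ) < 2 := by rw [← hkk]; linarith
    have h1'' : (0:ℤ) < kk := by exact_mod_cast h1'
    have h2'' : (kk:ℤ) < 2 := by exact_mod_cast h2'
    have : kk = 1 := by omega
    rw [hkk, this]; norm_num
  have h2s : F (s + s) = F s - s + k := by
    have := hkconst s ⟨le_of_lt hs0, by linarith⟩
    rw [hkdef, zero_add] at this
    linarith [this]
  have hss : s + s ∈ Icc (0:ℝ) 3 := ⟨by linarith, by linarith⟩
  have : F (s+s) < F 1 := hmono hss mem1 (by linarith)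
  rw [h2s, hFs, hk1, hd1] at this
  linarith

lemma crux (f : S ≃ₜ S) {s₁ s₂ : ℝ} (h₁0 : 0 < s₁) (h₁2 : s₁ < 1/2)
    (h₂0 : 0 < s₂) (h₂2 : s₂ < 1/2)
    (hp : ∀ x : S, f (x + (s₁:ℝ)) = f x + (s₁:ℝ))
    (hn : ∀ x : S, f (x + (s₂:ℝ)) = f x - (s₂:ℝ)) : False := by
  obtain ⟨F, hFc', hFl⟩ := exists_lift f
  have hFc : ContinuousOn F (Icc 0 3) := hFc'.continuousOn
  have hinj' : ∀ a b : ℝ, a ∈ Icc (0:ℝ) 3 → b ∈ Icc (0:ℝ) 3 →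
      ((F a :ℝ):S) = ((F b:ℝ):S) → ∃ k : ℤ, b - a = k := by
    intro a b ha hb hFab
    apply coe_eq_coe
    apply f.injective
    rw [← hFl a ha, ← hFl b hb]; exact hFab
  -- the degree step
  have hstep_int : ∀ t ∈ Icc (0:ℝ) 2, ∃ n : ℤ, F (t+1) - F t = n := by
    intro t ht
    have ht3 : t ∈ Icc (0:ℝ) 3 := ⟨ht.1, by linarith [ht.2]⟩
    have ht13 : t + 1 ∈ Icc (0:ℝ) 3 := ⟨by linarith [ht.1], by linarith [ht.2]⟩
    have h1 : ((F (t+1):ℝ):S) = ((F t:ℝ):S) := by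
      rw [hFl _ ht13, hFl _ ht3]
      congr 1
      exact AddCircle.coe_add_period 1 t
    obtain ⟨n, hn'⟩ := coe_eq_coe h1
    exact ⟨-n, by push_cast; linarith⟩
  have hstepc : ContinuousOn (fun t => F (t+1) - F t) (Icc 0 2) := by
    have h1 : ContinuousOn (fun t : ℝ => F (t+1)) (Icc 0 2) :=
      hFc'.comp (continuous_add_right 1) |>.continuousOn
    exact h1.sub (hFc.mono (Icc_subset_Icc le_rfl (by norm_num)))
  have hstep' := int_const (by norm_num : (0:ℝ) ≤ 2) hstepc hstep_int
  set d : ℝ := F 1 - F 0 with hddef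
  have hstep : ∀ t ∈ Icc (0:ℝ) 2, F (t+1) = F t + d := by
    intro t ht
    have := hstep' t ht
    rw [hddef]
    rw [show (0:ℝ) + 1 = 1 by norm_num] at this
    linarith
  -- d ≠ 0
  have hd0 : d ≠ 0 := by
    intro h0
    have hF10 : F 1 = F 0 := by rw [hddef] at h0; linarith
    have hsub01 : Icc (0:ℝ) 1 ⊆ Icc (0:ℝ) 3 := Icc_subset_Icc le_rfl (by norm_num)
    obtain ⟨tm, htm, hmin'⟩ := isCompact_Icc.exists_isMinOn
      (nonempty_Icc.mpr zero_le_one) (hFc.mono hsub01)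
    obtain ⟨tM, htM, hmax'⟩ := isCompact_Icc.exists_isMaxOn
      (nonempty_Icc.mpr zero_le_one) (hFc.mono hsub01)
    have hmin : ∀ y ∈ Icc (0:ℝ) 1, F tm ≤ F y := fun y hy => hmin' hy
    have hmax : ∀ y ∈ Icc (0:ℝ) 1, F y ≤ F tM := fun y hy => hmax' hy
    by_cases hMm : F tM - F tm < 1
    · set ε := (1 - (F tM - F tm))/2 with hε
      have hε0 : 0 < ε := by rw [hε]; linarith
      set x : S := f.symm (((F tm - ε : ℝ)) : S) with hx
      set r : ℝ := ((AddCircle.equivIco 1 0 x : ℝ)) with hr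
      have hr01 : r ∈ Ico (0:ℝ) 1 := by
        have := (AddCircle.equivIco 1 0 x).2
        simpa using this
      have hrx : ((r:ℝ):S) = x := (AddCircle.equivIco 1 0).symm_apply_apply x
      have hr3 : r ∈ Icc (0:ℝ) 3 := ⟨hr01.1, by linarith [hr01.2]⟩
      have hFr : ((F r:ℝ):S) = ((F tm - ε : ℝ):S) := by
        rw [hFl r hr3, hrx, hx]
        exact f.apply_symm_apply _
      obtain ⟨k, hk⟩ := coe_eq_coe hFr
      have hrb : F tm ≤ F r ∧ F r ≤ F tM :=
        ⟨hmin r ⟨hr01.1, le_of_lt hr01.2⟩, hmax r ⟨hr01.1, le_of_lt hr01.2⟩⟩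
      have hk1 : (k:ℝ) ≤ -ε := by linarith [hk, hrb.1]
      have hk2 : (-1:ℝ) < k := by
        have : (k:ℝ) = F tm - ε - F r := by linarith [hk]
        have h3 : F tm - F r ≥ -(F tM - F tm) := by linarith [hrb.2]
        rw [hε] at *
        linarith
      have hk1' : (k:ℤ) ≤ -1 := by
        have : (k:ℝ) < 0 := by linarith
        have : k < 0 := by exact_mod_cast this
        omega
      have : (k:ℝ) ≤ -1 := by exact_mod_cast hk1'
      linarith
    · push_neg at hMm
      have htmM : F tm ≤ F tM := by linarith
      have huIccsub : uIcc tm tM ⊆ Icc (0:ℝ) 1 := by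
        rcases le_total tm tM with h | h
        · rw [uIcc_of_le h]; exact Icc_subset_Icc htm.1 htM.2
        · rw [uIcc_of_ge h]; exact Icc_subset_Icc htM.1 htm.2
      have hiv := intermediate_value_uIcc (hFc.mono (huIccsub.trans hsub01))
      have hcmem : F tm + 1 ∈ uIcc (F tm) (F tM) := by
        rw [uIcc_of_le htmM]
        exact ⟨by linarith, by linarith⟩
      obtain ⟨c, hcu, hFc1⟩ := hiv hcmem
      have hc01 : c ∈ Icc (0:ℝ) 1 := huIccsub hcu
      have hcc : ((F c:ℝ):S) = ((F tm:ℝ):S) := by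
        rw [hFc1]
        exact AddCircle.coe_add_period 1 (F tm)
      obtain ⟨k, hk⟩ := hinj' c tm (hsub01 hc01) (hsub01 htm) hcc
      have hkabs : (-1:ℝ) ≤ k ∧ (k:ℝ) ≤ 1 := by
        constructor <;> [linarith [hk, hc01.2, htm.1]; linarith [hk, hc01.1, htm.2]]
      have hk1' : k = -1 ∨ k = 0 ∨ k = 1 := by
        have h1 : (-1:ℤ) ≤ k := by exact_mod_cast hkabs.1
        have h2 : (k:ℤ) ≤ 1 := by exact_mod_cast hkabs.2
        omega
      rcases hk1' with rfl | rfl | rfl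
      · -- tm - c = -1 : tm = 0, c = 1
        have htm0 : tm = 0 ∧ c = 1 := by
          constructor <;> push_cast at hk <;> [linarith [htm.1, hc01.2]; linarith [htm.1, hc01.2]]
        rw [htm0.1] at hFc1
        rw [htm0.2] at hFc1
        rw [hF10] at hFc1
        linarith
      · have : tm = c := by push_cast at hk; linarith
        rw [← this] at hFc1
        linarith
      · have htm1 : tm = 1 ∧ c = 0 := by
          constructor <;> push_cast at hk <;> [linarith [htm.2, hc01.1]; linarith [htm.2, hc01.1]]
        rw [htm1.1] at hFc1
        rw [htm1.2] at hFc1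
        rw [hF10] at hFc1
        linarith
  -- chain
  have chain : ∀ (n:ℕ) (t:ℝ), t ∈ Icc (0:ℝ) 3 → t + n ∈ Icc (0:ℝ) 3 →
      F (t + n) = F t + n * d := by
    intro n
    induction n with
    | zero => intro t _ _; simp
    | succ n ih =>
      intro t ht htn
      have hcast : ((n+1 : ℕ):ℝ) = (n:ℝ) + 1 := by push_cast; ring
      rw [hcast] at htn ⊢
      have h1 : t + n ∈ Icc (0:ℝ) 3 :=
        ⟨add_nonneg ht.1 (Nat.cast_nonneg n), by linarith [htn.2]⟩
      have h2 : t + n ∈ Icc (0:ℝ) 2 := ⟨h1.1, by linarith [htn.2]⟩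
      have := hstep (t + n) h2
      rw [show t + ((n:ℝ)+1) = (t + n) + 1 by ring, this, ih t ht h1]
      ring
  -- injectivity
  have hinjOn : InjOn F (Icc 0 3) := by
    intro a ha b hb hab
    obtain ⟨k, hk⟩ := hinj' a b ha hb (congrArg (fun r : ℝ => ((r:ℝ):S)) hab)
    have key : ∀ u v : ℝ, u ∈ Icc (0:ℝ) 3 → v ∈ Icc (0:ℝ) 3 → u ≤ v → F u = F v →
        (∃ m : ℤ, v - u = m) → u = v := by
      intro u v hu hv huv hFuv ⟨m, hm⟩
      have hm0 : (0:ℝ) ≤ m := by linarith [hm]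
      have hmnat : ((m.toNat : ℕ):ℝ) = (m:ℝ) := by
        have : (0:ℤ) ≤ m := by exact_mod_cast hm0
        exact_mod_cast Int.toNat_of_nonneg this
      have hv' : v = u + (m.toNat : ℕ) := by rw [hmnat]; linarith [hm]
      have := chain m.toNat u hu (by rw [← hv']; exact hv)
      rw [← hv', hFuv] at this
      have : (m.toNat : ℝ) * d = 0 := by linarith
      rcases mul_eq_zero.mp this with h | h
      · have : (m.toNat : ℝ) = 0 := h
        rw [hmnat] at this
        linarith [hm]
      · exact absurd h hd0
    rcases le_total a b with h | h
    · exact key a b ha hb h hab ⟨k, hk⟩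
    · exact (key b a hb ha h hab.symm ⟨-k, by push_cast; linarith [hk]⟩).symm
  rcases hFc.strictMonoOn_of_injOn_Icc' (by norm_num) hinjOn with hm | ha
  · exact core_incr f f.injective h₂0 h₂2 hn F hFc hFl hm d hstep
  · refine core_incr (fun x => -(f x)) (fun a b hab => f.injective (neg_injective hab))
      h₁0 h₁2 (fun x => by show -(f (x + (s₁:ℝ))) = -(f x) - (s₁:ℝ); rw [hp x]; abel) (fun t => -(F t)) hFc.neg
      (fun t ht => by show ((-(F t) : ℝ) : S) = -(f ((t:ℝ):S)); rw [AddCircle.coe_neg, hFl t ht])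
      (fun a haa b hbb hab => neg_lt_neg (ha haa hbb hab))
      (-d) (fun t ht => by show -(F (t+1)) = -(F t) + -d; rw [hstep t ht]; ring)

lemma coe_half_flip : (((1/2 : ℝ)):S) = -(((1/2:ℝ)):S) := by
  rw [← AddCircle.coe_neg]
  have := AddCircle.coe_add_period 1 (-(1/2) : ℝ)
  rw [show (-(1/2) + 1 : ℝ) = 1/2 by norm_num] at this
  exact this

/-- The set `L(F,d)` of distances simultaneously preserved by all homeomorphisms of the
family `F` on the circle `S¹ = ℝ/ℤ` (with the standard metric `d = dist`). -/
def presDist {N : ℕ} (F : Fin N → UnitAddCircle ≃ₜ UnitAddCircle) : Set ℝ :=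
  {s | s ∈ Set.Icc (0:ℝ) (1/2) ∧
    ∀ j : Fin N, ∀ x y : UnitAddCircle, dist x y = s → dist (F j x) (F j y) = s}

/-- `L(F,d)` is closed under the operation `s₁ ⊕ s₂ := min (s₁+s₂) (1-s₁-s₂)`. -/
theorem stmt2 {N : ℕ} (F : Fin N → UnitAddCircle ≃ₜ UnitAddCircle)
    (s₁ s₂ : ℝ) (h1 : s₁ ∈ presDist F) (h2 : s₂ ∈ presDist F) :
    min (s₁ + s₂) (1 - s₁ - s₂) ∈ presDist F := by
  obtain ⟨hI1, hpres1⟩ := h1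
  obtain ⟨hI2, hpres2⟩ := h2
  rw [mem_Icc] at hI1 hI2
  obtain ⟨h10, h12⟩ := hI1
  obtain ⟨h20, h22⟩ := hI2
  constructor
  · rw [mem_Icc]
    constructor
    · exact le_min (by linarith) (by linarith)
    · rcases le_total (s₁+s₂) (1/2) with h | h
      · exact le_trans (min_le_left _ _) h
      · exact le_trans (min_le_right _ _) (by linarith)
  · intro j x y hxy
    set f := F j with hfdef
    set σ : ℝ := s₁ + s₂ with hσdef
    have hd1 := dich f h10 h12 (fun a b hab => hpres1 j a b hab)
    have hd2 := dich f h20 h22 (fun a b hab => hpres2 j a b hab)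
    have hflip1 : (((s₁:ℝ)):S) = -(((s₁:ℝ)):S) ∨ (0 < s₁ ∧ s₁ < 1/2) := by
      rcases eq_or_lt_of_le h10 with h | h
      · left; rw [← h]; norm_num
      · rcases eq_or_lt_of_le h12 with h' | h'
        · left; rw [h']; exact coe_half_flip
        · right; exact ⟨h, h'⟩
    have hflip2 : (((s₂:ℝ)):S) = -(((s₂:ℝ)):S) ∨ (0 < s₂ ∧ s₂ < 1/2) := by
      rcases eq_or_lt_of_le h20 with h | h
      · left; rw [← h]; norm_num
      · rcases eq_or_lt_of_le h22 with h' | h'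
        · left; rw [h']; exact coe_half_flip
        · right; exact ⟨h, h'⟩
    have hc : ((σ:ℝ):S) = ((s₁:ℝ):S) + ((s₂:ℝ):S) := AddCircle.coe_add (1:ℝ) s₁ s₂
    have key : ∀ z : S, f (z + ((σ:ℝ):S)) = f z + ((σ:ℝ):S) ∨
        f (z + ((σ:ℝ):S)) = f z - ((σ:ℝ):S) := by
      intro z
      have hsplit : f (z + ((σ:ℝ):S)) = f ((z + ((s₁:ℝ):S)) + ((s₂:ℝ):S)) := by
        rw [hc, add_assoc]
      rcases hd1 with d1 | d1 <;> rcases hd2 with d2 | d2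
      · left
        rw [hsplit, d2, d1, hc]; abel
      · -- Pos₁, Neg₂
        have hval : f (z + ((σ:ℝ):S)) = f z + ((s₁:ℝ):S) - ((s₂:ℝ):S) := by
          rw [hsplit, d2, d1]
        rcases hflip1 with hf1 | hf1
        · right
          rw [hval, hc]
          nth_rewrite 1 [hf1]
          abel
        · rcases hflip2 with hf2 | hf2
          · left
            rw [hval, hc, sub_eq_add_neg, ← hf2]
            abel
          · exact absurd (crux f hf1.1 hf1.2 hf2.1 hf2.2 d1 d2) id
      · -- Neg₁, Pos₂
        have hval : f (z + ((σ:ℝ):S)) = f z - ((s₁:ℝ):S) + ((s₂:ℝ):S) := by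
          rw [hsplit, d2, d1]
        rcases hflip2 with hf2 | hf2
        · right
          rw [hval, hc]
          nth_rewrite 1 [hf2]
          abel
        · rcases hflip1 with hf1 | hf1
          · left
            rw [hval, hc, sub_eq_add_neg, ← hf1]
            abel
          · exact absurd (crux f hf2.1 hf2.2 hf1.1 hf1.2 d2 d1) id
      · right
        rw [hsplit, d2, d1, hc]; abel
    set sm : ℝ := min σ (1 - s₁ - s₂) with hsmdef
    have hsm0 : 0 ≤ sm := le_min (by linarith) (by linarith)
    have hσ01 : 0 ≤ σ ∧ σ ≤ 1 := ⟨by linarith, by linarith⟩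
    have hsm_or : ((sm:ℝ):S) = ((σ:ℝ):S) ∨ ((sm:ℝ):S) = -((σ:ℝ):S) := by
      rcases le_total σ (1 - s₁ - s₂) with h | h
      · left; rw [hsmdef, min_eq_left h]
      · right
        have hsm_eq : sm = 1 - s₁ - s₂ := by rw [hsmdef]; exact min_eq_right h
        have h1 : sm = -σ + 1 := by rw [hsm_eq, hσdef]; ring
        calc ((sm:ℝ):S) = ((-σ + 1 : ℝ):S) := by rw [h1]
        _ = ((-σ : ℝ):S) := AddCircle.coe_add_period (1:ℝ) (-σ)
        _ = -((σ:ℝ):S) := AddCircle.coe_neg (1:ℝ)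
    have hxy' : y = x + ((σ:ℝ):S) ∨ x = y + ((σ:ℝ):S) := by
      rcases dist_char hsm0 hxy with h | h <;> rcases hsm_or with h' | h'
      · left; rw [← h']; exact h
      · right; rw [h, h']; abel
      · right; rw [h, h']; abel
      · left; rw [h, h']; abel
    have hdist : ∀ u v : S, v = u + ((σ:ℝ):S) → dist (f u) (f v) = sm := by
      intro u v hv
      have hmin_eq : min σ (1 - σ) = sm := by
        rw [hsmdef, show (1 - σ : ℝ) = 1 - s₁ - s₂ by rw [hσdef]; ring]
      rcases key u with hk | hk
      · rw [hv, hk, dist_add_coe, norm_coe_min hσ01.1 hσ01.2, hmin_eq]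
      · rw [hv, hk, sub_eq_add_neg, dist_add_coe, norm_neg,
          norm_coe_min hσ01.1 hσ01.2, hmin_eq]
    rcases hxy' with h | h
    · exact hdist x y h
    · rw [dist_comm]; exact hdist y x h
end

section
/- Let (F,p) be an iterated function system of homeomorphisms f₁,...,f_N of the circle S¹ with a non-degenerate probability vector p = (p₁,...,p_N) (all p_j > 0). Assume F is forward minimal, i.e., every nonempty closed set A ⊆ S¹ with f_j(A) ⊆ A for all j equals S¹. Then every Borel probability measure μ on S¹ satisfying μ = Σ_j p_j (f_j)_*⁻¹μ (i.e., μ(E) = Σ_j p_j μ(f_j⁻¹(E)) for all Borel E) is nonatomic. -/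
open MeasureTheory
open scoped NNReal ENNReal

lemma my_infinite_uac : Infinite UnitAddCircle := by
  have h : (Set.Ico (0:ℝ) (0+1)).Infinite := by
    apply Set.Ico_infinite; norm_num
  haveI : Fact ((0:ℝ) < 1) := ⟨zero_lt_one⟩
  haveI hI : Infinite ↥(Set.Ico (0:ℝ) (0+1)) := Set.infinite_coe_iff.mpr h
  exact (AddCircle.equivIco (1:ℝ) 0).infinite_iff.mpr hI

/-- for a forward minimal IFS with (non-degenerate) probabilities of
homeomorphisms of the circle, every invariant Borel probability measure is nonatomic. -/
theorem stmt5 {N : ℕ} (F : Fin N → UnitAddCircle ≃ₜ UnitAddCircle)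
    (p : Fin N → ℝ≥0) (hp : ∀ j, 0 < p j) (hsum : ∑ j, p j = 1)
    (hmin : ∀ A : Set UnitAddCircle, A.Nonempty → IsClosed A →
      (∀ j, F j '' A ⊆ A) → A = Set.univ)
    (μ : Measure UnitAddCircle) [IsProbabilityMeasure μ]
    (hinv : μ = ∑ j, p j • Measure.map (F j) μ) :
    ∀ z : UnitAddCircle, μ {z} = 0 := by
  by_contra h
  push_neg at h
  obtain ⟨z₀, hz₀⟩ := h
  -- the atom mass function, valued in ℝ≥0
  set g : UnitAddCircle → ℝ≥0 := fun z => (μ {z}).toNNReal with hg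
  have hcoe : ∀ z, (g z : ℝ≥0∞) = μ {z} := fun z =>
    ENNReal.coe_toNNReal (measure_ne_top μ _)
  -- pointwise invariance
  have key : ∀ z, g z = ∑ j, p j * g ((F j).symm z) := by
    intro z
    have h1 : μ {z} = ∑ j, (p j : ℝ≥0∞) * μ {(F j).symm z} := by
      conv_lhs => rw [hinv]
      rw [Measure.finset_sum_apply]
      refine Finset.sum_congr rfl fun j _ => ?_
      have hpre : (F j) ⁻¹' {z} = {(F j).symm z} := by
        ext x
        simp only [Set.mem_preimage, Set.mem_singleton_iff]
        constructor
        · intro hx; rw [← hx]; simp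
        · intro hx; rw [hx]; simp
      rw [Measure.smul_apply, Measure.map_apply (F j).continuous.measurable
        (measurableSet_singleton z), hpre, ENNReal.smul_def, smul_eq_mul]
    have : ((g z : ℝ≥0) : ℝ≥0∞) = ((∑ j, p j * g ((F j).symm z) : ℝ≥0) : ℝ≥0∞) := by
      rw [hcoe, h1, ENNReal.coe_finset_sum]
      exact Finset.sum_congr rfl fun j _ => by rw [ENNReal.coe_mul, hcoe]
    exact_mod_cast this
  -- finitely many atoms of mass ≥ g z₀
  have hgz₀ : 0 < g z₀ := by
    rw [pos_iff_ne_zero]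
    intro hc
    apply hz₀
    rw [← hcoe z₀, hc, ENNReal.coe_zero]
  have hTfin : {z : UnitAddCircle | (g z₀ : ℝ≥0∞) ≤ μ {z}}.Finite := by
    apply MeasureTheory.Measure.finite_const_le_meas_of_disjoint_iUnion μ
      (ε := (g z₀ : ℝ≥0∞)) (by exact_mod_cast hgz₀)
      (As := fun z : UnitAddCircle => {z})
      (fun z => measurableSet_singleton z)
      (fun a b hab => by simpa using hab)
      (measure_ne_top μ _)
  set T := {z : UnitAddCircle | (g z₀ : ℝ≥0∞) ≤ μ {z}} with hT
  have hTg : ∀ z, z ∈ T ↔ g z₀ ≤ g z := by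
    intro z; rw [hT, Set.mem_setOf_eq, ← hcoe z, ENNReal.coe_le_coe]
  have hz₀T : z₀ ∈ T := by rw [hTg]
  -- max of g over T
  obtain ⟨z₁, hz₁T, hz₁max⟩ := hTfin.toFinset.exists_max_image g
    ⟨z₀, hTfin.mem_toFinset.mpr hz₀T⟩
  rw [hTfin.mem_toFinset] at hz₁T
  have hmax : ∀ z, g z ≤ g z₁ := by
    intro z
    by_cases hzT : z ∈ T
    · exact hz₁max z (hTfin.mem_toFinset.mpr hzT)
    · have : g z < g z₀ := by
        rw [hTg] at hzT; exact lt_of_not_ge hzT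
      exact this.le.trans ((hTg z₁).mp hz₁T)
  set A := {z : UnitAddCircle | g z = g z₁} with hA
  have hAsub : A ⊆ T := by
    intro z hz
    rw [hTg]
    rw [hA, Set.mem_setOf_eq] at hz
    rw [hz]
    exact (hTg z₁).mp hz₁T
  have hAfin : A.Finite := hTfin.subset hAsub
  have hApos : ∀ z ∈ A, 0 < g z := fun z hz =>
    lt_of_lt_of_le hgz₀ ((hTg z).mp (hAsub hz))
  -- backward invariance of A
  have hback : ∀ z ∈ A, ∀ j, (F j).symm z ∈ A := by
    intro z hz j
    rw [hA, Set.mem_setOf_eq] at hz ⊢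
    have hk := key z
    rw [hz] at hk
    -- g z₁ = ∑ p j * g ((F j).symm z), each term ≤ p j * g z₁, sum of p j = 1
    have hle : ∀ i ∈ Finset.univ, p i * g ((F i).symm z) ≤ p i * g z₁ :=
      fun i _ => mul_le_mul_right (hmax _) _
    have hsum' : ∑ i, p i * g ((F i).symm z) = ∑ i, p i * g z₁ := by
      rw [← hk, ← Finset.sum_mul, hsum, one_mul]
    have := (Finset.sum_eq_sum_iff_of_le hle).mp hsum' j (Finset.mem_univ j)
    exact mul_left_cancel₀ (hp j).ne' this
  have hAne : A.Nonempty := ⟨z₁, rfl⟩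
  -- (F j).symm '' A = A, hence F j '' A = A
  have hforward : ∀ j, F j '' A ⊆ A := by
    intro j
    have hsub : (F j).symm '' A ⊆ A := by
      rintro _ ⟨z, hz, rfl⟩; exact hback z hz j
    have heq : (F j).symm '' A = A :=
      Set.eq_of_subset_of_ncard_le hsub
        (by rw [Set.ncard_image_of_injective _ (F j).symm.injective]) hAfin
    intro w hw
    obtain ⟨z, hz, rfl⟩ := hw
    rw [← heq] at hz
    obtain ⟨y, hy, rfl⟩ := hz
    simpa using hy
  have hAuniv := hmin A hAne (hAfin.isClosed) hforward
  haveI := my_infinite_uac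
  exact Set.infinite_univ (hAuniv ▸ hAfin)
end

section
/- Let F = {f₁,...,f_N} be homeomorphisms of S¹ with probability vector p (p_j > 0, Σ p_j = 1), and let μ₋ be a nonatomic fully supported Borel probability measure invariant for the inverse IFS, i.e., μ₋(E) = Σ_j p_j μ₋(f_j(E)) for all Borel E. Define ρ(x,y) := min{μ₋([x,y]), μ₋([y,x])}. Then (F,p) is non-expansive on average with respect to ρ: for all x,y ∈ S¹, Σ_j p_j ρ(f_j(x), f_j(y)) ≤ ρ(x,y). -/
open MeasureTheory Set
open scoped NNReal ENNReal

/-- The representative in `[0,1)` of a point of the circle `S¹ = ℝ/ℤ`. -/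
noncomputable def rep (z : UnitAddCircle) : ℝ := ((AddCircle.equivIco 1 0 z) : ℝ)

/-- The positively oriented closed arc from `x` to `y` on the circle. -/
def arc (x y : UnitAddCircle) : Set UnitAddCircle := {z | rep (z - x) ≤ rep (y - x)}

lemma rep_mem (z : UnitAddCircle) : rep z ∈ Set.Ico (0:ℝ) 1 := by
  have := (AddCircle.equivIco 1 0 z).2
  simpa [rep] using this

lemma coe_rep (z : UnitAddCircle) : ((rep z : ℝ) : UnitAddCircle) = z :=
  (AddCircle.equivIco 1 0).symm_apply_apply z

lemma rep_coe (t : ℝ) : rep (t : UnitAddCircle) = Int.fract t := by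
  have := AddCircle.coe_equivIco_mk_apply (p := (1:ℝ)) t
  simpa [rep] using this

lemma rep_eq_zero_iff {z : UnitAddCircle} : rep z = 0 ↔ z = 0 := by
  constructor
  · intro h
    have := coe_rep z
    rw [h] at this
    simpa using this.symm
  · rintro rfl
    have : ((0:ℝ) : UnitAddCircle) = 0 := by simp
    rw [← this, rep_coe]; simp

lemma rep_sub_eq_fract (z u : UnitAddCircle) : rep (z - u) = Int.fract (rep z - rep u) := by
  conv_lhs => rw [← coe_rep z, ← coe_rep u]
  rw [← AddCircle.coe_sub, rep_coe]

lemma rep_sub_pos {z u : UnitAddCircle} (h : z ≠ u) : 0 < rep (z - u) := by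
  rcases (rep_mem (z - u)).1.lt_or_eq with h' | h'
  · exact h'
  · exact absurd (sub_eq_zero.mp (rep_eq_zero_iff.mp h'.symm)) h

/-- u strictly inside arc a b gives 0 < rep(b-u) < rep(a-u) -/
lemma arc_char {a b u : UnitAddCircle} (hu : u ∈ arc a b) (hua : u ≠ a) (hub : u ≠ b) :
    0 < rep (b - u) ∧ rep (b - u) < rep (a - u) := by
  set A := rep (a - u) with hA
  set B := rep (b - u) with hB
  have hA01 : A ∈ Set.Ico (0:ℝ) 1 := rep_mem _
  have hB01 : B ∈ Set.Ico (0:ℝ) 1 := rep_mem _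
  have hApos : 0 < A := rep_sub_pos (fun h => hua (by rw [h]))
  have hBpos : 0 < B := rep_sub_pos (fun h => hub (by rw [h]))
  refine ⟨hBpos, ?_⟩
  have h1 : rep (u - a) = 1 - A := by
    have e : u - a = -(a - u) := by abel
    rw [e, ← coe_rep (a - u), ← AddCircle.coe_neg, rep_coe, ← hA,
      Int.fract_neg, Int.fract_eq_self.mpr ⟨hA01.1, hA01.2⟩]
    rw [Int.fract_eq_self.mpr ⟨hA01.1, hA01.2⟩]; exact hApos.ne'
  have h2 : rep (b - a) = Int.fract (B - A) := by
    have e : b - a = (b - u) - (a - u) := by abel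
    rw [e, ← coe_rep (b - u), ← coe_rep (a - u), ← AddCircle.coe_sub, rep_coe]
  have hu0 : rep (u - a) ≤ rep (b - a) := hu
  have hu' : 1 - A ≤ Int.fract (B - A) := by rw [h1, h2] at hu0; exact hu0
  by_contra hcon
  push_neg at hcon  -- A ≤ B
  have : Int.fract (B - A) = B - A := Int.fract_eq_self.mpr ⟨by linarith, by linarith [hA01.2, hB01.2]⟩
  rw [this] at hu'
  linarith [hB01.2]

/-- v strictly inside arc b a, given 0 < B < A (coords rel. u): B < rep(v-u) < A -/
lemma arc_char' {a b u v : UnitAddCircle} (hv : v ∈ arc b a) (hva : v ≠ a) (hvb : v ≠ b)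
    (hBA : rep (b - u) < rep (a - u)) :
    rep (b - u) < rep (v - u) ∧ rep (v - u) < rep (a - u) := by
  set A := rep (a - u) with hA
  set B := rep (b - u) with hB
  set V := rep (v - u) with hV
  have hA01 : A ∈ Set.Ico (0:ℝ) 1 := rep_mem _
  have hB01 : B ∈ Set.Ico (0:ℝ) 1 := rep_mem _
  have hV01 : V ∈ Set.Ico (0:ℝ) 1 := rep_mem _
  obtain ⟨hA0, hA1⟩ := hA01
  obtain ⟨hB0, hB1⟩ := hB01
  obtain ⟨hV0, hV1⟩ := hV01
  have h2 : rep (a - b) = A - B := by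
    have e : a - b = (a - u) - (b - u) := by abel
    rw [e, ← coe_rep (a - u), ← coe_rep (b - u), ← AddCircle.coe_sub, rep_coe, ← hA, ← hB]
    exact Int.fract_eq_self.mpr ⟨by linarith, by linarith⟩
  have h3 : rep (v - b) = Int.fract (V - B) := by
    have e : v - b = (v - u) - (b - u) := by abel
    rw [e, ← coe_rep (v - u), ← coe_rep (b - u), ← AddCircle.coe_sub, rep_coe]
  have hv0 : rep (v - b) ≤ rep (a - b) := hv
  have hv' : Int.fract (V - B) ≤ A - B := by rw [h3, h2] at hv0; exact hv0
  have hVA : V ≠ A := by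
    intro h
    apply hva
    have : ((V:ℝ) : UnitAddCircle) = ((A:ℝ) : UnitAddCircle) := by rw [h]
    rw [hV, hA, coe_rep, coe_rep] at this
    have := congrArg (· + u) this
    simpa [sub_add_cancel] using this
  have hVB : V ≠ B := by
    intro h
    apply hvb
    have : ((V:ℝ) : UnitAddCircle) = ((B:ℝ) : UnitAddCircle) := by rw [h]
    rw [hV, hB, coe_rep, coe_rep] at this
    have := congrArg (· + u) this
    simpa [sub_add_cancel] using this
  rcases le_or_gt B V with hle | hlt
  · have : Int.fract (V - B) = V - B :=
      Int.fract_eq_self.mpr ⟨by linarith, by linarith⟩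
    rw [this] at hv'
    exact ⟨lt_of_le_of_ne hle (Ne.symm hVB), lt_of_le_of_ne (by linarith) hVA⟩
  · exfalso
    have : Int.fract (V - B) = V - B + 1 := by
      rw [← Int.fract_add_one (V - B)]
      exact Int.fract_eq_self.mpr ⟨by linarith, by linarith⟩
    rw [this] at hv'
    linarith

lemma arc_eq_image (x y : UnitAddCircle) :
    arc x y = (fun t : ℝ => x + (t : UnitAddCircle)) '' Set.Icc 0 (rep (y - x)) := by
  ext z
  constructor
  · intro hz
    exact ⟨rep (z - x), ⟨(rep_mem _).1, hz⟩, by show x + _ = z; rw [coe_rep]; abel⟩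
  · rintro ⟨t, ⟨ht0, ht1⟩, rfl⟩
    have htlt : t < 1 := lt_of_le_of_lt ht1 (rep_mem (y - x)).2
    have : (x + (t : UnitAddCircle)) - x = (t : UnitAddCircle) := by abel
    show rep ((x + (t : UnitAddCircle)) - x) ≤ rep (y - x)
    rw [this, rep_coe, Int.fract_eq_self.mpr ⟨ht0, htlt⟩]
    exact ht1

lemma continuous_coe_circle : Continuous (fun t : ℝ => (t : UnitAddCircle)) :=
  AddCircle.continuous_mk' 1

lemma left_mem_arc (x y : UnitAddCircle) : x ∈ arc x y := by
  rw [arc_eq_image]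
  exact ⟨0, ⟨le_refl _, (rep_mem _).1⟩, by simp⟩

lemma right_mem_arc (x y : UnitAddCircle) : y ∈ arc x y := by
  rw [arc_eq_image]
  exact ⟨rep (y - x), ⟨(rep_mem _).1, le_refl _⟩, by show x + _ = y; rw [coe_rep]; abel⟩

lemma isCompact_arc (x y : UnitAddCircle) : IsCompact (arc x y) := by
  rw [arc_eq_image]
  exact isCompact_Icc.image (continuous_const.add continuous_coe_circle)

lemma isPreconnected_arc (x y : UnitAddCircle) : IsPreconnected (arc x y) := by
  rw [arc_eq_image]
  exact (isPreconnected_Icc).image _ (continuous_const.add continuous_coe_circle).continuousOn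

lemma contains_arc {C : Set UnitAddCircle} (hC : IsPreconnected C)
    {a b : UnitAddCircle} (ha : a ∈ C) (hb : b ∈ C) : arc a b ⊆ C ∨ arc b a ⊆ C := by
  by_contra h
  push_neg at h
  obtain ⟨u, hu, huC⟩ := not_subset.mp h.1
  obtain ⟨v, hv, hvC⟩ := not_subset.mp h.2
  have hua : u ≠ a := fun e => huC (e ▸ ha)
  have hub : u ≠ b := fun e => huC (e ▸ hb)
  have hva : v ≠ a := fun e => hvC (e ▸ ha)
  have hvb : v ≠ b := fun e => hvC (e ▸ hb)
  obtain ⟨hB0, hBA⟩ := arc_char hu hua hub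
  obtain ⟨hBV, hVA⟩ := arc_char' hv hva hvb hBA
  set φ : UnitAddCircle → ℝ := fun z => rep (z - u) with hφdef
  have hφ : ContinuousOn φ C := by
    intro z hz
    have hzu : z - u ≠ ((0:ℝ) : UnitAddCircle) := by
      intro e
      apply huC
      have : z = u := by
        have : z - u = 0 := by simpa using e
        rwa [sub_eq_zero] at this
      rwa [← this]
    apply ContinuousAt.continuousWithinAt
    have c1 : ContinuousAt (fun w : UnitAddCircle => w - u) z :=
      (continuous_id.sub continuous_const).continuousAt
    have c2 : ContinuousAt (AddCircle.equivIco 1 0) (z - u) :=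
      AddCircle.continuousAt_equivIco 1 0 hzu
    have c3 : ContinuousAt (fun w : UnitAddCircle => AddCircle.equivIco 1 0 (w - u)) z :=
      ContinuousAt.comp c2 c1
    exact ContinuousAt.comp continuous_subtype_val.continuousAt c3
  have hIVT := hC.intermediate_value hb ha hφ
  obtain ⟨c, hcC, hcV⟩ := hIVT ⟨hBV.le, hVA.le⟩
  have : c = v := by
    have hcV' : rep (c - u) = rep (v - u) := hcV
    have h1 : ((rep (c - u) : ℝ) : UnitAddCircle) = ((rep (v - u) : ℝ) : UnitAddCircle) := by
      rw [hcV']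
    rw [coe_rep, coe_rep] at h1
    have := congrArg (· + u) h1
    simpa [sub_add_cancel] using this
  exact hvC (this ▸ hcC)

/-- if `μ₋` is a nonatomic fully supported probability measure invariant for
the inverse IFS (`μ₋(E) = Σ_j p_j μ₋(f_j(E))`), then the IFS `(F,p)` is non-expansive on
average with respect to the metric `ρ(x,y) = min (μ₋ [x,y]) (μ₋ [y,x])`. -/
theorem stmt9 {N : ℕ} (F : Fin N → UnitAddCircle ≃ₜ UnitAddCircle)
    (p : Fin N → ℝ≥0) (hp : ∀ j, 0 < p j) (hsum : ∑ j, p j = 1)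
    (μ : Measure UnitAddCircle) [IsProbabilityMeasure μ]
    (hna : ∀ z : UnitAddCircle, μ {z} = 0)
    (hfull : ∀ U : Set UnitAddCircle, IsOpen U → U.Nonempty → 0 < μ U)
    (hinv : μ = ∑ j, p j • Measure.map ((F j).symm) μ) :
    ∀ x y : UnitAddCircle,
      ∑ j, (p j : ℝ) *
          min (μ (arc (F j x) (F j y))).toReal (μ (arc (F j y) (F j x))).toReal ≤
        min (μ (arc x y)).toReal (μ (arc y x)).toReal := by
  intro x y
  -- invariance rewritten via images
  have hμ : ∀ S : Set UnitAddCircle, MeasurableSet S →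
      (μ S).toReal = ∑ j, (p j : ℝ) * (μ ((F j) '' S)).toReal := by
    intro S hS
    have h1 : μ S = ∑ j, (p j : ℝ≥0∞) * μ ((F j) '' S) := by
      conv_lhs => rw [hinv]
      rw [Measure.finset_sum_apply]
      refine Finset.sum_congr rfl fun j _ => ?_
      rw [Measure.smul_apply, Measure.map_apply (F j).symm.continuous.measurable hS,
        Homeomorph.preimage_symm, ENNReal.smul_def, smul_eq_mul]
    rw [h1, ENNReal.toReal_sum]
    · exact Finset.sum_congr rfl fun j _ => by
        rw [ENNReal.toReal_mul, ENNReal.coe_toReal]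
    · intro j _
      exact ENNReal.mul_ne_top ENNReal.coe_ne_top (measure_ne_top μ _)
  -- per-j key inequality
  have key : ∀ (j : Fin N) (a b : UnitAddCircle),
      min (μ (arc (F j a) (F j b))).toReal (μ (arc (F j b) (F j a))).toReal ≤
        (μ ((F j) '' arc a b)).toReal := by
    intro j a b
    have hconn : IsPreconnected ((F j) '' arc a b) :=
      (isPreconnected_arc a b).image _ (F j).continuous.continuousOn
    have hfa : F j a ∈ (F j) '' arc a b := ⟨a, left_mem_arc a b, rfl⟩
    have hfb : F j b ∈ (F j) '' arc a b := ⟨b, right_mem_arc a b, rfl⟩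
    rcases contains_arc hconn hfa hfb with hsub | hsub
    · exact le_trans (min_le_left _ _)
        (ENNReal.toReal_mono (measure_ne_top μ _) (measure_mono hsub))
    · exact le_trans (min_le_right _ _)
        (ENNReal.toReal_mono (measure_ne_top μ _) (measure_mono hsub))
  have harc : ∀ a b : UnitAddCircle, MeasurableSet (arc a b) :=
    fun a b => (isCompact_arc a b).isClosed.measurableSet
  refine le_min ?_ ?_
  · rw [hμ (arc x y) (harc x y)]
    refine Finset.sum_le_sum fun j _ => ?_
    exact mul_le_mul_of_nonneg_left (key j x y) (p j).coe_nonneg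
  · rw [hμ (arc y x) (harc y x)]
    refine Finset.sum_le_sum fun j _ => ?_
    have := key j y x
    rw [min_comm] at this
    exact mul_le_mul_of_nonneg_left this (p j).coe_nonneg
end

section
/- Let (F,p) be a forward minimal IFS with probabilities of homeomorphisms of S¹. Then for every z ∈ S¹, every nonempty open set O ⊆ S¹ and every j ∈ {1,...,N}, with probability one the event {Z_n^z ∈ O and I_{n+1} = j} occurs for infinitely many n. -/
open MeasureTheory Filter
open scoped NNReal

/-- The random trajectory `Z_0 = z`, `Z_{n+1} = f_{I_{n+1}}(Z_n)` (indices shifted to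
start at `0`), so that the map applied right after time `n` is `f_{I_n}`. -/
def traj {Ω K : Type*} {N : ℕ} (F : Fin N → K → K) (I : ℕ → Ω → Fin N) (x : K) :
    ℕ → Ω → K
  | 0 => fun _ => x
  | n + 1 => fun ω => F (I n ω) (traj F I x n ω)

/-- Deterministic trajectory driven by a sequence of letters. -/
def seqTraj {K : Type*} {N : ℕ} (F : Fin N → K → K) (z : K) (c : ℕ → Fin N) : ℕ → K
  | 0 => z
  | k + 1 => F (c k) (seqTraj F z c k)

lemma traj_eq_seqTraj {Ω K : Type*} {N : ℕ} (F : Fin N → K → K) (I : ℕ → Ω → Fin N)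
    (z : K) (ω : Ω) : ∀ n, traj F I z n ω = seqTraj F z (fun i => I i ω) n
  | 0 => rfl
  | n + 1 => by
      show F (I n ω) (traj F I z n ω) = F (I n ω) (seqTraj F z (fun i => I i ω) n)
      rw [traj_eq_seqTraj F I z ω n]

lemma seqTraj_congr {K : Type*} {N : ℕ} (F : Fin N → K → K) (z : K) {c c' : ℕ → Fin N} :
    ∀ n, (∀ i, i < n → c i = c' i) → seqTraj F z c n = seqTraj F z c' n
  | 0, _ => rfl
  | n + 1, h => by
      show F (c n) (seqTraj F z c n) = F (c' n) (seqTraj F z c' n)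
      rw [h n (Nat.lt_succ_self n),
        seqTraj_congr F z n (fun i hi => h i (Nat.lt_succ_of_lt hi))]

lemma seqTraj_add {K : Type*} {N : ℕ} (F : Fin N → K → K) (z : K) (c : ℕ → Fin N) (n : ℕ) :
    ∀ k, seqTraj F z c (n + k) = seqTraj F (seqTraj F z c n) (fun i => c (n + i)) k
  | 0 => rfl
  | k + 1 => by
      show F (c (n + k)) (seqTraj F z c (n + k))
          = F (c (n + k)) (seqTraj F (seqTraj F z c n) (fun i => c (n + i)) k)
      rw [seqTraj_add F z c n k]

lemma seqTraj_foldl {K : Type*} {N : ℕ} (F : Fin N → K → K) :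
    ∀ (l : List (Fin N)) (z : K) (c : ℕ → Fin N),
      (∀ i (h : i < l.length), c i = l.get ⟨i, h⟩) →
      seqTraj F z c l.length = l.foldl (fun x i => F i x) z
  | [], _, _, _ => rfl
  | a :: l, z, c, h => by
      have h0 : c 0 = a := h 0 (Nat.succ_pos _)
      have h1 : (a :: l).length = 1 + l.length := by
        simp [Nat.add_comm]
      rw [h1, seqTraj_add]
      have h2 : seqTraj F z c 1 = F a z := by
        show F (c 0) z = F a z
        rw [h0]
      rw [h2]
      have h3 : ∀ i (hi : i < l.length), c (1 + i) = l.get ⟨i, hi⟩ := by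
        intro i hi
        have := h (1 + i) (by simpa [Nat.add_comm] using Nat.succ_lt_succ hi)
        simpa [Nat.add_comm 1 i, List.get] using this
      rw [seqTraj_foldl F l (F a z) (fun i => c (1 + i)) h3]
      rfl

/-- for a forward minimal IFS with probabilities of homeomorphisms of the
circle, for every starting point `z`, every nonempty open `O` and every index `j`, with
probability one the trajectory visits `O` with next chosen map `f_j` infinitely often. -/
theorem stmt12 {N : ℕ} (F : Fin N → UnitAddCircle ≃ₜ UnitAddCircle)
    (p : Fin N → ℝ≥0) (hp : ∀ j, 0 < p j) (hsum : ∑ j, p j = 1)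
    (hmin : ∀ (x : UnitAddCircle) (O : Set UnitAddCircle), IsOpen O → O.Nonempty →
      ∃ l : List (Fin N), l.foldl (fun z j => F j z) x ∈ O)
    {Ω : Type*} {mΩ : MeasurableSpace Ω} (P : Measure Ω) [IsProbabilityMeasure P]
    (I : ℕ → Ω → Fin N) (hImeas : ∀ n, Measurable (I n))
    (hIndep : ProbabilityTheory.iIndepFun I P)
    (hLaw : ∀ n j, P (I n ⁻¹' {j}) = (p j : ENNReal))
    (z : UnitAddCircle) (O : Set UnitAddCircle) (hO : IsOpen O) (hOne : O.Nonempty)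
    (j : Fin N) :
    P {ω | ∀ m : ℕ, ∃ n : ℕ, m ≤ n ∧
        traj (fun i => ⇑(F i)) I z n ω ∈ O ∧ I n ω = j} = 1 := by
  classical
  set f : Fin N → UnitAddCircle → UnitAddCircle := fun i => ⇑(F i) with hf
  -- Step A : uniform bound on the length of words bringing any point into O
  have contFold : ∀ l : List (Fin N), Continuous (fun y => l.foldl (fun x i => F i x) y) := by
    intro l
    induction l with
    | nil => simpa using continuous_id'
    | cons a l ih =>
        simp only [List.foldl_cons]
        exact ih.comp (F a).continuous
  choose w hw using fun x => hmin x O hO hOne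
  have hcover : (Set.univ : Set UnitAddCircle) ⊆
      ⋃ x : UnitAddCircle, (fun y => (w x).foldl (fun x i => F i x) y) ⁻¹' O :=
    fun y _ => Set.mem_iUnion.2 ⟨y, hw y⟩
  obtain ⟨s, hs⟩ := isCompact_univ.elim_finite_subcover
    (fun x : UnitAddCircle => (fun y => (w x).foldl (fun x i => F i x) y) ⁻¹' O)
    (fun x => hO.preimage (contFold (w x))) hcover
  set L : ℕ := s.sup (fun x => (w x).length) with hLdef
  have hL : ∀ y : UnitAddCircle, ∃ l : List (Fin N),
      l.length ≤ L ∧ l.foldl (fun x i => F i x) y ∈ O := by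
    intro y
    obtain ⟨x, hx, hy⟩ := Set.mem_iUnion₂.1 (hs (Set.mem_univ y))
    exact ⟨w x, by simpa using Finset.le_sup (f := fun x => (w x).length) hx, hy⟩
  -- Step B : positive constants
  set εnn : ℝ≥0 := Finset.univ.inf' ⟨j, Finset.mem_univ j⟩ p with hεnn
  set ε : ENNReal := (εnn : ENNReal) with hε
  have hε_le : ∀ i : Fin N, ε ≤ (p i : ENNReal) := fun i =>
    ENNReal.coe_le_coe.2 (Finset.inf'_le p (Finset.mem_univ i))
  have hε_pos : 0 < ε := by
    have : 0 < εnn := by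
      obtain ⟨i, -, hi⟩ := Finset.exists_mem_eq_inf' ⟨j, Finset.mem_univ j⟩ p
      have hi' : εnn = p i := hi
      rw [hi']
      exact hp i
    exact ENNReal.coe_pos.2 this
  have hp_le_one : ∀ i : Fin N, p i ≤ 1 := by
    intro i
    calc p i ≤ ∑ k, p k := Finset.single_le_sum (fun k _ => (zero_le : 0 ≤ p k)) (Finset.mem_univ i)
    _ = 1 := hsum
  have hε_le_one : ε ≤ 1 := by
    calc ε ≤ (p j : ENNReal) := hε_le j
    _ ≤ 1 := ENNReal.coe_le_one_iff.2 (hp_le_one j)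
  set δ : ENNReal := ε ^ (L + 1) with hδ
  have hδ_pos : 0 < δ := ENNReal.pow_pos hε_pos _
  have hδ_le_one : δ ≤ 1 := pow_le_one' hε_le_one _
  -- Step C : events
  set Z : ℕ → Ω → UnitAddCircle := fun n ω => traj f I z n ω with hZ
  set Sk : ℕ → Set Ω := fun n => Z n ⁻¹' O ∩ I n ⁻¹' {j} with hSk
  have hFmeas : Measurable (fun q : UnitAddCircle × Fin N => f q.2 q.1) :=
    measurable_from_prod_countable_left (fun i => (F i).continuous.measurable)
  have hZseq : ∀ (n : ℕ) (ω : Ω), Z n ω = seqTraj f z (fun i => I i ω) n :=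
    fun n ω => traj_eq_seqTraj f I z ω n
  have hZmeas : ∀ n, Measurable (Z n) := by
    intro n
    induction n with
    | zero => exact measurable_const
    | succ n ih =>
        exact hFmeas.comp (ih.prodMk (hImeas n))
  have hSkmeas : ∀ n, MeasurableSet (Sk n) :=
    fun n => ((hZmeas n) hO.measurableSet).inter ((hImeas n) (measurableSet_singleton j))
  set Fail : ℕ → ℕ → Set Ω := fun m n => ⋂ k ∈ Finset.Ico m n, (Sk k)ᶜ with hFail
  have hFailmeas : ∀ m n, MeasurableSet (Fail m n) := by
    intro m n
    exact MeasurableSet.biInter (Finset.Ico m n).countable_toSet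
      (fun k _ => (hSkmeas k).compl)
  set SB : ℕ → Set Ω := fun n => ⋃ k ∈ Finset.Ico n (n + (L + 1)), Sk k with hSB
  have hSBmeas : ∀ n, MeasurableSet (SB n) := by
    intro n
    exact MeasurableSet.biUnion (Finset.Ico n (n + (L + 1))).countable_toSet
      (fun k _ => hSkmeas k)
  -- Atoms
  set A : ∀ n : ℕ, (Fin n → Fin N) → Set Ω := fun n v => ⋂ i : Fin n, I i ⁻¹' {v i} with hA
  have hmemA : ∀ n (v : Fin n → Fin N) (ω : Ω), ω ∈ A n v ↔ ∀ i : Fin n, I i ω = v i := by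
    intro n v ω
    simp [hA]
  have hAmeas : ∀ n (v : Fin n → Fin N), MeasurableSet (A n v) :=
    fun n v => MeasurableSet.iInter (fun i => (hImeas i) (measurableSet_singleton (v i)))
  -- cylinder probabilities
  have hcyl : ∀ (S : Finset ℕ) (c : ℕ → Fin N),
      P (⋂ k ∈ S, I k ⁻¹' {c k}) = ∏ k ∈ S, (p (c k) : ENNReal) := by
    intro S c
    rw [hIndep.meas_biInter (fun k _ => ⟨{c k}, measurableSet_singleton _, rfl⟩)]
    exact Finset.prod_congr rfl fun k _ => hLaw k (c k)
  -- partition lemma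
  have hpart : ∀ (n : ℕ) (E : Set Ω), MeasurableSet E →
      P E = ∑ v : Fin n → Fin N, P (E ∩ A n v) := by
    intro n E hE
    have hcov : E = ⋃ v : Fin n → Fin N, E ∩ A n v := by
      ext ω
      simp only [Set.mem_iUnion, Set.mem_inter_iff]
      constructor
      · intro hωE
        exact ⟨fun i => I i ω, hωE, (hmemA n _ ω).2 (fun i => rfl)⟩
      · rintro ⟨v, hωE, _⟩
        exact hωE
    have hdisj : Pairwise (Function.onFun Disjoint (fun v : Fin n → Fin N => E ∩ A n v)) := by
      intro v v' hvv'
      refine Set.disjoint_left.2 ?_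
      rintro ω ⟨-, hω⟩ ⟨-, hω'⟩
      apply hvv'
      funext i
      rw [← (hmemA n v ω).1 hω i, ← (hmemA n v' ω).1 hω' i]
    conv_lhs => rw [hcov]
    rw [measure_iUnion hdisj (fun v => hE.inter (hAmeas n v)), tsum_fintype]
  -- per-atom block success bound
  have hblockAtom : ∀ (n : ℕ) (v : Fin n → Fin N),
      δ * P (A n v) ≤ P (A n v ∩ SB n) := by
    intro n v
    set x : UnitAddCircle :=
      seqTraj f z (fun k => if h : k < n then v ⟨k, h⟩ else j) n with hx
    obtain ⟨l, hlen, hfold⟩ := hL x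
    set c : ℕ → Fin N := fun k =>
      if h : k < n then v ⟨k, h⟩ else if h2 : k - n < l.length then l.get ⟨k - n, h2⟩ else j
      with hc
    have hAv_eq : A n v = ⋂ k ∈ Finset.range n, I k ⁻¹' {c k} := by
      ext ω
      simp only [hmemA, Set.mem_iInter, Finset.mem_range, Set.mem_preimage,
        Set.mem_singleton_iff]
      constructor
      · intro h k hk
        rw [hc]
        simp only [hk, dif_pos]
        exact h ⟨k, hk⟩
      · intro h i
        have := h i i.2
        rw [hc] at this
        simpa [i.2] using this
    set B : Set Ω := ⋂ k ∈ Finset.range (n + (l.length + 1)), I k ⁻¹' {c k} with hB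
    -- probability of B
    have hPB : P B = P (A n v) * ∏ k ∈ Finset.Ico n (n + (l.length + 1)), (p (c k) : ENNReal) := by
      rw [hB, hcyl, hAv_eq, hcyl]
      rw [Finset.range_eq_Ico]
      rw [← Finset.prod_Ico_consecutive (fun k => (p (c k) : ENNReal))
        (Nat.zero_le n) (Nat.le_add_right n (l.length + 1))]
      rw [← Finset.range_eq_Ico]
    have hprodge : δ ≤ ∏ k ∈ Finset.Ico n (n + (l.length + 1)), (p (c k) : ENNReal) := by
      have h1 : ε ^ (l.length + 1) ≤ ∏ k ∈ Finset.Ico n (n + (l.length + 1)), (p (c k) : ENNReal) := by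
        have : ∏ _k ∈ Finset.Ico n (n + (l.length + 1)), ε ≤
            ∏ k ∈ Finset.Ico n (n + (l.length + 1)), (p (c k) : ENNReal) :=
          Finset.prod_le_prod' (fun k _ => hε_le (c k))
        simpa [Finset.prod_const, Nat.card_Ico] using this
      refine le_trans ?_ h1
      rw [hδ]
      exact pow_le_pow_right_of_le_one' hε_le_one (Nat.succ_le_succ hlen)
    -- B is contained in the good event
    have hBsub : B ⊆ A n v ∩ SB n := by
      intro ω hω
      have hωc : ∀ k, k < n + (l.length + 1) → I k ω = c k := by
        intro k hk
        have := Set.mem_iInter₂.1 hω k (Finset.mem_range.2 hk)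
        simpa using this
      have hωA : ω ∈ A n v := by
        rw [hmemA]
        intro i
        have := hωc i (lt_of_lt_of_le i.2 (Nat.le_add_right n _))
        rw [hc] at this
        simpa [i.2] using this
      refine ⟨hωA, ?_⟩
      -- value at time n
      have hZn : Z n ω = x := by
        rw [hZseq, hx]
        apply seqTraj_congr
        intro i hi
        have := hωc i (lt_of_lt_of_le hi (Nat.le_add_right n _))
        rw [this, hc]
        simp [hi]
      -- value at time n + l.length
      have hZnl : Z (n + l.length) ω = l.foldl (fun x i => F i x) x := by
        rw [hZseq, seqTraj_add]
        have hZn' : seqTraj f z (fun i => I i ω) n = x := by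
          rw [← hZseq]
          exact hZn
        rw [hZn']
        apply seqTraj_foldl
        intro i hi
        have h1 : n + i < n + (l.length + 1) := by omega
        rw [hωc (n + i) h1, hc]
        have h2 : ¬ (n + i < n) := by omega
        have h3 : n + i - n = i := by omega
        simp only [h2, dif_neg, not_false_iff, h3, hi, dif_pos]
      have hIj : I (n + l.length) ω = j := by
        rw [hωc (n + l.length) (by omega), hc]
        have h2 : ¬ (n + l.length < n) := by omega
        have h3 : n + l.length - n = l.length := by omega
        simp [h2, h3]
      have hωSk : ω ∈ Sk (n + l.length) := by
        rw [hSk]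
        refine ⟨?_, hIj⟩
        show Z (n + l.length) ω ∈ O
        rw [hZnl]
        exact hfold
      rw [hSB]
      refine Set.mem_biUnion ?_ hωSk
      refine Finset.mem_Ico.2 ⟨Nat.le_add_right n _, ?_⟩
      omega
    calc δ * P (A n v) = P (A n v) * δ := mul_comm _ _
      _ ≤ P (A n v) * ∏ k ∈ Finset.Ico n (n + (l.length + 1)), (p (c k) : ENNReal) :=
          mul_le_mul_right hprodge _
      _ = P B := hPB.symm
      _ ≤ P (A n v ∩ SB n) := measure_mono hBsub
  -- dichotomy : atoms are inside or outside Fail m n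
  have hdich : ∀ (m n : ℕ) (v : Fin n → Fin N),
      Fail m n ∩ A n v = A n v ∨ Fail m n ∩ A n v = ∅ := by
    intro m n v
    by_cases hne : (Fail m n ∩ A n v).Nonempty
    · left
      obtain ⟨ω₀, hω₀F, hω₀A⟩ := hne
      refine Set.eq_of_subset_of_subset Set.inter_subset_right ?_
      intro ω hωA
      refine ⟨?_, hωA⟩
      rw [hFail]
      simp only [Set.mem_iInter, Finset.mem_Ico]
      intro k hk
      have hω₀k : ω₀ ∈ (Sk k)ᶜ := by
        have := Set.mem_iInter₂.1 hω₀F k (Finset.mem_Ico.2 hk)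
        exact this
      have hagree : ∀ i, i < n → I i ω = I i ω₀ := by
        intro i hi
        rw [(hmemA n v ω).1 hωA ⟨i, hi⟩, (hmemA n v ω₀).1 hω₀A ⟨i, hi⟩]
      have hZk : Z k ω = Z k ω₀ := by
        rw [hZseq, hZseq]
        exact seqTraj_congr f z k (fun i hi => hagree i (lt_of_lt_of_le hi (le_of_lt hk.2)))
      have hIk : I k ω = I k ω₀ := hagree k hk.2
      intro hωSk
      apply hω₀k
      rw [hSk] at hωSk ⊢
      refine ⟨show Z k ω₀ ∈ O by rw [← hZk]; exact hωSk.1,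
        show I k ω₀ = j by rw [← hIk]; exact hωSk.2⟩
    · right
      exact Set.not_nonempty_iff_eq_empty.1 hne
  -- block step
  have hstep : ∀ m n, m ≤ n → P (Fail m (n + (L + 1))) ≤ (1 - δ) * P (Fail m n) := by
    intro m n hmn
    have hsub : Fail m (n + (L + 1)) ⊆ Fail m n \ SB n := by
      intro ω hω
      have hω' : ∀ k, m ≤ k → k < n + (L + 1) → ω ∉ Sk k := by
        intro k h1 h2
        exact Set.mem_iInter₂.1 hω k (Finset.mem_Ico.2 ⟨h1, h2⟩)
      constructor
      · rw [hFail]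
        refine Set.mem_iInter₂.2 (fun k hk => ?_)
        rw [Finset.mem_Ico] at hk
        exact hω' k hk.1 (lt_of_lt_of_le hk.2 (by omega))
      · rw [hSB]
        intro hωSB
        obtain ⟨k, hk, hωk⟩ := Set.mem_iUnion₂.1 hωSB
        rw [Finset.mem_Ico] at hk
        exact hω' k (le_trans hmn hk.1) hk.2 hωk
    have hge : δ * P (Fail m n) ≤ P (Fail m n ∩ SB n) := by
      rw [hpart n (Fail m n) (hFailmeas m n),
        hpart n (Fail m n ∩ SB n) ((hFailmeas m n).inter (hSBmeas n)), Finset.mul_sum]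
      refine Finset.sum_le_sum (fun v _ => ?_)
      rcases hdich m n v with h | h
      · have h2 : Fail m n ∩ SB n ∩ A n v = A n v ∩ SB n := by
          rw [Set.inter_right_comm, h]
        have h3 : Fail m n ∩ A n v = A n v := h
        rw [h2, h3]
        exact hblockAtom n v
      · have h2 : Fail m n ∩ SB n ∩ A n v = ∅ := by
          rw [Set.inter_right_comm, h]
          simp
        rw [h, h2]
        simp
    calc P (Fail m (n + (L + 1))) ≤ P (Fail m n \ SB n) := measure_mono hsub
      _ = P (Fail m n \ (Fail m n ∩ SB n)) := by rw [Set.diff_self_inter]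
      _ = P (Fail m n) - P (Fail m n ∩ SB n) := by
          rw [measure_diff Set.inter_subset_left
            (((hFailmeas m n).inter (hSBmeas n)).nullMeasurableSet)
            (measure_ne_top P _)]
      _ ≤ P (Fail m n) - δ * P (Fail m n) := tsub_le_tsub_left hge _
      _ = 1 * P (Fail m n) - δ * P (Fail m n) := by rw [one_mul]
      _ = (1 - δ) * P (Fail m n) := by
          rw [ENNReal.sub_mul (fun _ _ => measure_ne_top P _)]
  -- iteration
  have hiter : ∀ m t, P (Fail m (m + t * (L + 1))) ≤ (1 - δ) ^ t := by
    intro m t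
    induction t with
    | zero => simpa using prob_le_one
    | succ t ih =>
        have heq : m + (t + 1) * (L + 1) = (m + t * (L + 1)) + (L + 1) := by ring
        rw [heq]
        calc P (Fail m ((m + t * (L + 1)) + (L + 1)))
            ≤ (1 - δ) * P (Fail m (m + t * (L + 1))) :=
              hstep m _ (Nat.le_add_right m _)
          _ ≤ (1 - δ) * (1 - δ) ^ t := mul_le_mul_right ih _
          _ = (1 - δ) ^ (t + 1) := by rw [pow_succ, mul_comm]
  -- the tail event has probability 0
  set G : ℕ → Set Ω := fun m => ⋂ n, ⋂ (_ : m ≤ n), (Sk n)ᶜ with hG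
  have hGzero : ∀ m, P (G m) = 0 := by
    intro m
    have hGsub : ∀ t, G m ⊆ Fail m (m + t * (L + 1)) := by
      intro t ω hω
      rw [hFail]
      refine Set.mem_iInter₂.2 (fun k hk => ?_)
      rw [Finset.mem_Ico] at hk
      exact Set.mem_iInter₂.1 hω k hk.1
    have hle : ∀ t, P (G m) ≤ (1 - δ) ^ t :=
      fun t => le_trans (measure_mono (hGsub t)) (hiter m t)
    have h1δ : (1 - δ) < 1 :=
      ENNReal.sub_lt_self ENNReal.one_ne_top one_ne_zero (ne_of_gt hδ_pos)
    have htend : Tendsto (fun t : ℕ => (1 - δ) ^ t) atTop (nhds 0) :=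
      ENNReal.tendsto_pow_atTop_nhds_zero_of_lt_one h1δ
    have : P (G m) ≤ 0 := ge_of_tendsto' htend hle
    exact le_antisymm this zero_le
  -- conclusion
  set T : Set Ω := {ω | ∀ m : ℕ, ∃ n : ℕ, m ≤ n ∧
      traj (fun i => ⇑(F i)) I z n ω ∈ O ∧ I n ω = j} with hT
  have hTeq : T = ⋂ m, ⋃ n, ⋃ (_ : m ≤ n), Sk n := by
    ext ω
    simp only [hT, Set.mem_setOf_eq, Set.mem_iInter, Set.mem_iUnion, hSk,
      Set.mem_inter_iff, Set.mem_preimage, Set.mem_singleton_iff]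
    constructor
    · intro h m
      obtain ⟨n, h1, h2, h3⟩ := h m
      exact ⟨n, h1, h2, h3⟩
    · intro h m
      obtain ⟨n, h1, h2, h3⟩ := h m
      exact ⟨n, h1, h2, h3⟩
  have hTmeas : MeasurableSet T := by
    rw [hTeq]
    exact MeasurableSet.iInter (fun m => MeasurableSet.iUnion
      (fun n => MeasurableSet.iUnion (fun _ => hSkmeas n)))
  have hTc : Tᶜ ⊆ ⋃ m, G m := by
    intro ω hω
    rw [hTeq] at hω
    simp only [Set.mem_compl_iff, Set.mem_iInter, Set.mem_iUnion, not_forall, not_exists] at hω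
    obtain ⟨m, hm⟩ := hω
    refine Set.mem_iUnion.2 ⟨m, ?_⟩
    rw [hG]
    refine Set.mem_iInter₂.2 (fun n hn => ?_)
    exact hm n hn
  have hTczero : P Tᶜ = 0 := by
    refine le_antisymm (le_trans (measure_mono hTc) ?_) zero_le
    rw [show (0 : ENNReal) = ∑' m : ℕ, P (G m) by simp [hGzero]]
    exact measure_iUnion_le G
  exact (prob_compl_eq_zero_iff hTmeas).1 hTczero
end

section
/- Let F = {f₁,...,f_N} be homeomorphisms of S¹ and suppose L(F,d) is finite with smallest positive element 1/k for some integer k ≥ 2. Define π : S¹ → S¹ by π(x) = kx mod 1 and, for each j, f̃_j(x) = k·(f_j(x/k) mod 1/k). Then each f̃_j is well defined (independent of the choice of representative x/k of π-preimage) and π ∘ f_j = f̃_j ∘ π, i.e., each f̃_j is a topological factor of f_j via the common factor map π. -/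
section aux

/-- Any element of `UnitAddCircle` of norm `1/k` is `±(1/k)`. -/
lemma norm_eq_inv_k {k : ℕ} (hk : 2 ≤ k) {z : UnitAddCircle}
    (hz : ‖z‖ = 1 / (k : ℝ)) :
    z = ((1 / (k : ℝ) : ℝ) : UnitAddCircle) ∨
      z = -((1 / (k : ℝ) : ℝ) : UnitAddCircle) := by
  obtain ⟨x, rfl⟩ := QuotientAddGroup.mk_surjective z
  rw [AddCircle.norm_eq] at hz
  simp only [inv_one, one_mul, mul_one] at hz
  have hx : x - (round x : ℝ) = 1 / (k : ℝ) ∨ x - (round x : ℝ) = -(1 / (k : ℝ)) :=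
    abs_eq (by positivity) |>.mp hz
  have hmk : ((x - (round x : ℝ) : ℝ) : UnitAddCircle) = ((x : ℝ) : UnitAddCircle) := by
    rw [AddCircle.coe_sub, sub_eq_self]
    exact (AddCircle.coe_eq_zero_iff 1).mpr ⟨round x, by simp⟩
  rcases hx with h | h
  · left; rw [← hmk, h]
  · right; rw [← hmk, h, AddCircle.coe_neg]

lemma ksmul_coe (k : ℕ) (r : ℝ) :
    k • ((r : ℝ) : UnitAddCircle) = (((k : ℝ) * r : ℝ) : UnitAddCircle) := by
  rw [← AddCircle.coe_nsmul, nsmul_eq_mul]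

lemma ksmul_p_eq_zero {k : ℕ} (hk : 2 ≤ k) :
    k • (((1 / (k : ℝ) : ℝ)) : UnitAddCircle) = 0 := by
  have hk0 : (k : ℝ) ≠ 0 := by positivity
  rw [ksmul_coe, mul_one_div, div_self hk0]
  exact (AddCircle.coe_period 1)

end aux

/-- if `L(F,d)` is finite with smallest positive element `1/k`, `k ≥ 2`,
then with `π(x) = k·x (mod 1)` each map `f_j` admits a well-defined continuous factor
`f̃_j` satisfying `π ∘ f_j = f̃_j ∘ π`; moreover `π` is a (continuous) surjection, i.e.
each `f̃_j` is a topological factor of `f_j` via the common factor map `π`. -/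
theorem stmt16 {N : ℕ} (F : Fin N → UnitAddCircle ≃ₜ UnitAddCircle)
    (k : ℕ) (hk : 2 ≤ k)
    (hfin : (presDist F).Finite)
    (hmem : (1 / (k : ℝ)) ∈ presDist F)
    (hsmall : ∀ s ∈ presDist F, 0 < s → (1 / (k : ℝ)) ≤ s) :
    Function.Surjective (fun x : UnitAddCircle => k • x) ∧
    ∀ j : Fin N, ∃ g : UnitAddCircle → UnitAddCircle, Continuous g ∧
      ∀ x : UnitAddCircle, g (k • x) = k • (F j x) := by
  have hk0 : (k : ℝ) ≠ 0 := by positivity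
  set p : UnitAddCircle := (((1 / (k : ℝ) : ℝ)) : UnitAddCircle) with hp
  -- surjectivity of π
  have hsurj : Function.Surjective (fun x : UnitAddCircle => k • x) := by
    intro y
    obtain ⟨r, rfl⟩ := QuotientAddGroup.mk_surjective y
    exact ⟨((r / (k : ℝ) : ℝ) : UnitAddCircle), by
      simp only [ksmul_coe, mul_div_cancel₀ _ hk0]⟩
  refine ⟨hsurj, fun j => ?_⟩
  set f : UnitAddCircle → UnitAddCircle := (F j : UnitAddCircle → UnitAddCircle) with hf
  have hfc : Continuous f := (F j).continuous
  -- distance 1/k is preserved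
  have hpres : ∀ x y : UnitAddCircle, dist x y = 1 / (k : ℝ) →
      dist (f x) (f y) = 1 / (k : ℝ) := hmem.2 j
  -- ‖p‖ = 1/k
  have hnp' : |(1 : ℝ) / (k : ℝ)| ≤ |(1:ℝ)| / 2 := by
    rw [abs_of_pos (by positivity), abs_one, div_le_div_iff₀ (by positivity) two_pos]
    have : (2 : ℝ) ≤ (k : ℝ) := by exact_mod_cast hk
    linarith
  have hnp : ‖p‖ = 1 / (k : ℝ) := by
    rw [hp, AddCircle.norm_coe_eq_abs_iff 1 one_ne_zero |>.mpr hnp',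
      abs_of_pos (by positivity)]
  -- dist x (x + p) = 1/k
  have hdist : ∀ x : UnitAddCircle, dist (x + p) x = 1 / (k : ℝ) := by
    intro x
    rw [dist_eq_norm, add_sub_cancel_left, hnp]
  -- the displacement map
  set φ : UnitAddCircle → UnitAddCircle := fun x => f (x + p) - f x with hφ
  have hφc : Continuous φ := (hfc.comp (continuous_id.add continuous_const)).sub hfc
  have hφval : ∀ x, φ x = p ∨ φ x = -p := by
    intro x
    have h1 : dist (f (x + p)) (f x) = 1 / (k : ℝ) := hpres _ _ (hdist x)
    have h2 : ‖φ x‖ = 1 / (k : ℝ) := by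
      rw [hφ]; simpa [dist_eq_norm] using h1
    exact norm_eq_inv_k hk h2
  -- φ is constant (connectedness)
  have hconst : ∃ c : UnitAddCircle, (k • c = 0) ∧ ∀ x, φ x = c := by
    by_cases hpp : p = -p
    · exact ⟨p, ksmul_p_eq_zero hk, fun x => (hφval x).elim id (fun h => h.trans hpp.symm)⟩
    · have hA : IsClosed (φ ⁻¹' {p}) := (isClosed_singleton).preimage hφc
      have hB : IsClosed (φ ⁻¹' {-p}) := (isClosed_singleton).preimage hφc
      have hcompl : (φ ⁻¹' {p})ᶜ = φ ⁻¹' {-p} := by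
        ext x
        simp only [Set.mem_compl_iff, Set.mem_preimage, Set.mem_singleton_iff]
        constructor
        · intro h; exact (hφval x).resolve_left h
        · intro h h'; exact hpp (h'.symm.trans h)
      have hAopen : IsOpen (φ ⁻¹' {p}) := by
        rw [← compl_compl (φ ⁻¹' {p}), hcompl]
        exact hB.isOpen_compl
      have hclopen : IsClopen (φ ⁻¹' {p}) := ⟨hA, hAopen⟩
      rcases isClopen_iff.mp hclopen with h | h
      · refine ⟨-p, ?_, fun x => ?_⟩
        · rw [smul_neg, ksmul_p_eq_zero hk, neg_zero]
        · have := hφval x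
          rcases this with h' | h'
          · exact absurd (Set.eq_empty_iff_forall_notMem.mp h x
              (Set.mem_preimage.mpr (Set.mem_singleton_iff.mpr h'))) (fun hfalse => hfalse)
          · exact h'
      · exact ⟨p, ksmul_p_eq_zero hk, fun x => by
          have : x ∈ φ ⁻¹' {p} := h ▸ Set.mem_univ x
          simpa using this⟩
  obtain ⟨c, hck, hc⟩ := hconst
  have hstep : ∀ x, f (x + p) = f x + c := by
    intro x
    have := hc x
    rw [hφ] at this
    simp only at this
    linear_combination (norm := abel_nf) this
  -- iterate: f (x + n • p) = f x + n • c for all integers n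
  have hiter : ∀ (n : ℤ) (x : UnitAddCircle), f (x + n • p) = f x + n • c := by
    have hstep' : ∀ x, f (x - p) = f x - c := by
      intro x
      have := hstep (x - p)
      rw [sub_add_cancel] at this
      rw [this]; abel
    intro n
    induction n using Int.induction_on with
    | zero => intro x; simp
    | succ m ih =>
        intro x
        have : x + ((m : ℤ) + 1) • p = (x + (m : ℤ) • p) + p := by
          rw [add_smul, one_smul]; abel
        rw [this, hstep, ih]
        rw [add_smul, one_smul]; abel
    | pred m ih =>
        intro x
        have : x + (-(m : ℤ) - 1) • p = (x + (-(m : ℤ)) • p) - p := by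
          rw [sub_smul, one_smul]; abel
        rw [this, hstep', ih]
        rw [sub_smul, one_smul]; abel
  -- well-definedness
  have hwd : ∀ x y : UnitAddCircle, k • x = k • y → k • f x = k • f y := by
    intro x y hxy
    -- y - x is in the kernel, i.e. y = x + n • p
    obtain ⟨a, rfl⟩ := QuotientAddGroup.mk_surjective x
    obtain ⟨b, rfl⟩ := QuotientAddGroup.mk_surjective y
    rw [ksmul_coe, ksmul_coe] at hxy
    have : (((k : ℝ) * b - (k : ℝ) * a : ℝ) : UnitAddCircle) = 0 := by
      rw [AddCircle.coe_sub, hxy, sub_self]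
    obtain ⟨n, hn⟩ := (AddCircle.coe_eq_zero_iff (1 : ℝ)).mp this
    have hb : (b : ℝ) = a + (n : ℝ) * (1 / (k : ℝ)) := by
      have : (k : ℝ) * b - (k : ℝ) * a = (n : ℝ) := by
        rw [← hn]; simp
      field_simp at this ⊢
      linarith
    have hy : ((b : ℝ) : UnitAddCircle) = ((a : ℝ) : UnitAddCircle) + n • p := by
      rw [hb, AddCircle.coe_add, hp, ← AddCircle.coe_zsmul, zsmul_eq_mul]
    rw [hy, hiter n, smul_add]
    have : k • (n • c) = n • (k • c) := smul_comm k n c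
    rw [this, hck, smul_zero, add_zero]
  -- build g
  have hπc : Continuous (fun x : UnitAddCircle => k • x) := continuous_nsmul k
  have hq : Topology.IsQuotientMap (fun x : UnitAddCircle => k • x) :=
    (hπc.isClosedMap).isQuotientMap hπc hsurj
  refine ⟨fun y => k • f (Function.surjInv hsurj y), ?_, ?_⟩
  · rw [hq.continuous_iff]
    have : (fun y => k • f (Function.surjInv hsurj y)) ∘ (fun x : UnitAddCircle => k • x)
        = fun x => k • f x := by
      funext x
      exact hwd _ _ (Function.surjInv_eq hsurj (k • x))
    rw [this]
    exact (continuous_nsmul k).comp hfc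
  · intro x
    exact hwd _ _ (Function.surjInv_eq hsurj (k • x))
end
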